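/- arXiv:1501.05672 — 6 statements merged into one kernel-verified Lean document; each statement's English description precedes it below -/
import Mathlib

section
/- Suppose in addition that there exist 0 < r₀ < 1 < R and a function f analytic on the annulus {ζ ∈ ℂ : r₀ < |ζ| < R} such that w′(θ) = f(e^{iθ}) for all θ ∈ (0,2π). Then there exist r ∈ (0,1) and functions G̃, D̃, J̃ analytic on {z ∈ ℂ : |z| > r} such that G̃(z) = G_n(z), D̃(z) = D_n(z), and J̃(z) = J_n(z) for all z with |z| > 1. -/
open Complex Polynomial MeasureTheory

open Metric intervalIntegral

lemma diffAt_cauchy (ψ : ℝ → ℂ) (hψ : Continuous ψ) (ρ : ℝ) (hρ : 0 ≤ ρ) {z₀ : ℂ}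
    (hz : ρ < ‖z₀‖) :
    DifferentiableAt ℂ (fun z => ∫ θ in (0:ℝ)..(2*Real.pi), ψ θ / (z - circleMap 0 ρ θ)) z₀ := by
  set ε := (‖z₀‖ - ρ)/2 with hε
  have hεpos : 0 < ε := by simp only [hε]; linarith
  have key : ∀ x ∈ ball z₀ ε, ∀ θ : ℝ, ε ≤ ‖x - circleMap 0 ρ θ‖ := by
    intro x hx θ
    have h1 : ‖circleMap 0 ρ θ‖ = ρ := by
      rw [norm_circleMap_zero, _root_.abs_of_nonneg hρ]
    have h2 : ‖x - z₀‖ < ε := by simpa [Complex.dist_eq] using hx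
    have h3 : ‖z₀‖ - ‖x - z₀‖ ≤ ‖x‖ := by
      have h := norm_add_le (z₀ - x) x
      simp only [sub_add_cancel] at h
      rw [norm_sub_rev z₀ x] at h
      linarith
    have h4 : ‖x‖ - ‖circleMap 0 ρ θ‖ ≤ ‖x - circleMap 0 ρ θ‖ := by
      have h := norm_add_le (x - circleMap 0 ρ θ) (circleMap 0 ρ θ)
      simp only [sub_add_cancel] at h
      linarith
    rw [h1] at h4
    have : ‖z₀‖ - ρ = 2 * ε := by simp [hε]; ring
    linarith
  have hne : ∀ x ∈ ball z₀ ε, ∀ θ : ℝ, x - circleMap 0 ρ θ ≠ 0 := by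
    intro x hx θ h
    have := key x hx θ
    rw [h] at this; simp at this; linarith
  have hmem : z₀ ∈ ball z₀ ε := mem_ball_self hεpos
  have hcont : ∀ x ∈ ball z₀ ε, Continuous (fun θ : ℝ => ψ θ / (x - circleMap 0 ρ θ)) := by
    intro x hx
    exact hψ.div ((continuous_const.sub (continuous_circleMap 0 ρ))) (fun θ => hne x hx θ)
  -- bound on ψ
  obtain ⟨M, hM⟩ : ∃ M, ∀ θ ∈ Set.uIcc (0:ℝ) (2*Real.pi), ‖ψ θ‖ ≤ M := by
    obtain ⟨M, hM⟩ := (isCompact_uIcc (a := (0:ℝ)) (b := 2*Real.pi)).exists_bound_of_continuousOn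
      hψ.continuousOn
    exact ⟨M, hM⟩
  have hres := hasDerivAt_integral_of_dominated_loc_of_deriv_le (F := fun x θ => ψ θ / (x - circleMap 0 ρ θ))
    (F' := fun x θ => -(ψ θ) / (x - circleMap 0 ρ θ)^2) (x₀ := z₀)
    (μ := volume) (bound := fun _ => M / ε^2) (a := 0) (b := 2*Real.pi) (ball_mem_nhds z₀ hεpos)
    ?_ ?_ ?_ ?_ ?_ ?_
  · exact hres.2.differentiableAt
  · filter_upwards [ball_mem_nhds z₀ hεpos] with x hx
    exact (hcont x hx).aestronglyMeasurable
  · exact ((hcont z₀ hmem)).intervalIntegrable 0 (2*Real.pi)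
  · refine Continuous.aestronglyMeasurable ?_
    exact (hψ.neg.div ((continuous_const.sub (continuous_circleMap 0 ρ)).pow 2)
      (fun θ => pow_ne_zero 2 (hne z₀ hmem θ)))
  · refine MeasureTheory.ae_of_all _ (fun θ hθ x hx => ?_)
    have hk := key x hx θ
    have hθ' : θ ∈ Set.uIcc (0:ℝ) (2*Real.pi) := Set.uIoc_subset_uIcc hθ
    have hMθ := hM θ hθ'
    have hMnn : 0 ≤ M := le_trans (norm_nonneg _) hMθ
    rw [norm_div, norm_neg, norm_pow]
    have h1 : ε^2 ≤ ‖x - circleMap 0 ρ θ‖^2 := by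
      apply pow_le_pow_left₀ (le_of_lt hεpos) hk
    calc ‖ψ θ‖ / ‖x - circleMap 0 ρ θ‖^2 ≤ ‖ψ θ‖ / ε^2 := by
          apply div_le_div_of_nonneg_left (norm_nonneg _) (by positivity) h1
      _ ≤ M / ε^2 := by apply div_le_div_of_nonneg_right hMθ (by positivity)
  · exact intervalIntegrable_const
  · refine MeasureTheory.ae_of_all _ (fun θ hθ x hx => ?_)
    have h := ((hasDerivAt_id x).sub_const (circleMap 0 ρ θ)).inv (hne x hx θ)
    have h2 := h.const_mul (ψ θ)
    simp only [div_eq_mul_inv]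
    convert h2 using 1
    · rfl
    · funext y
      simp only [Pi.inv_apply, id]
    · simp only [id]
      ring

lemma circle_int_eq {ρ : ℝ} (hρ : 0 < ρ) (A : ℂ → ℂ)
    (hA : ∀ θ : ℝ, ContinuousAt A (circleMap 0 ρ θ)) (z : ℂ) (hz : ρ < ‖z‖) :
    (∮ ζ in C(0, ρ), A ζ / (ζ * (z - ζ)))
      = Complex.I * ∫ θ in (0:ℝ)..(2*Real.pi), A (circleMap 0 ρ θ) / (z - circleMap 0 ρ θ) := by
  rw [circleIntegral, ← intervalIntegral.integral_const_mul]
  refine intervalIntegral.integral_congr (fun θ _ => ?_)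
  have h0 : circleMap 0 ρ θ ≠ 0 := circleMap_ne_center (ne_of_gt hρ)
  have hzne : z - circleMap 0 ρ θ ≠ 0 := by
    intro h
    have : ‖circleMap 0 ρ θ‖ = ρ := by
      rw [norm_circleMap_zero, _root_.abs_of_nonneg hρ.le]
    have h2 : z = circleMap 0 ρ θ := by linear_combination h
    rw [h2, this] at hz; linarith
  rw [deriv_circleMap]
  simp only [smul_eq_mul]
  field_simp

/-- contour deformation + analyticity -/
lemma main_ext (r₀ R : ℝ) (hr₀ : 0 < r₀) (hr₀1 : r₀ < 1) (hR : 1 < R)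
    (A : ℂ → ℂ)
    (hA : ∀ ζ : ℂ, r₀ < ‖ζ‖ → ‖ζ‖ < R → DifferentiableAt ℂ A ζ) :
    ∃ T : ℂ → ℂ,
      AnalyticOnNhd ℂ T {z : ℂ | (r₀+1)/2 < ‖z‖} ∧
      ∀ z : ℂ, 1 < ‖z‖ →
        T z = ∫ θ in (0:ℝ)..(2*Real.pi), A (circleMap 0 1 θ) / (z - circleMap 0 1 θ) := by
  set ρ := (r₀+1)/2 with hρdef
  have hρ0 : 0 < ρ := by simp [hρdef]; linarith
  have hρ1 : ρ < 1 := by simp [hρdef]; linarith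
  have hρr₀ : r₀ < ρ := by simp [hρdef]; linarith
  have habs : ∀ (s θ : ℝ), 0 ≤ s → ‖circleMap 0 s θ‖ = s := by
    intro s θ hs; rw [norm_circleMap_zero, _root_.abs_of_nonneg hs]
  have hAc : ∀ θ : ℝ, ContinuousAt A (circleMap 0 ρ θ) := by
    intro θ
    refine (hA _ ?_ ?_).continuousAt <;> rw [habs _ _ hρ0.le] <;> linarith
  have hAc1 : ∀ θ : ℝ, ContinuousAt A (circleMap 0 1 θ) := by
    intro θ
    refine (hA _ ?_ ?_).continuousAt <;> rw [habs _ _ zero_le_one] <;> linarith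
  have hψ : Continuous (fun θ : ℝ => A (circleMap 0 ρ θ)) := by
    rw [continuous_iff_continuousAt]
    exact fun θ => (hAc θ).comp (continuous_circleMap 0 ρ).continuousAt
  refine ⟨fun z => ∫ θ in (0:ℝ)..(2*Real.pi), A (circleMap 0 ρ θ) / (z - circleMap 0 ρ θ),
    ?_, ?_⟩
  · have hopen : IsOpen {z : ℂ | ρ < ‖z‖} :=
      isOpen_lt continuous_const continuous_norm
    refine DifferentiableOn.analyticOnNhd (fun z hz => ?_) hopen
    exact (diffAt_cauchy _ hψ ρ hρ0.le hz).differentiableWithinAt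
  · intro z hz
    -- both equal circle integrals
    have e1 := circle_int_eq hρ0 A hAc z (lt_trans hρ1 hz)
    have e2 := circle_int_eq zero_lt_one A hAc1 z hz
    have hg : ∀ ζ : ℂ, ρ ≤ ‖ζ‖ → ‖ζ‖ ≤ 1 →
        DifferentiableAt ℂ (fun ζ => A ζ / (ζ * (z - ζ))) ζ := by
      intro ζ h1 h2
      have hζ0 : ζ ≠ 0 := by
        intro h; rw [h] at h1; simp at h1; linarith
      have hζz : z - ζ ≠ 0 := by
        intro h
        have : z = ζ := by linear_combination h
        rw [this] at hz; linarith
      exact (hA ζ (lt_of_lt_of_le hρr₀ h1) (lt_of_le_of_lt h2 (by linarith))).div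
        (differentiableAt_id.mul (differentiableAt_const _ |>.sub differentiableAt_id))
        (mul_ne_zero hζ0 hζz)
    have e3 : (∮ ζ in C(0, 1), A ζ / (ζ * (z - ζ)))
        = ∮ ζ in C(0, ρ), A ζ / (ζ * (z - ζ)) := by
      refine circleIntegral_eq_of_differentiable_on_annulus_off_countable hρ0 hρ1.le
        (Set.countable_empty) (fun ζ hζ => ?_) (fun ζ hζ => ?_)
      · obtain ⟨h1, h2⟩ := hζ
        simp only [mem_closedBall, mem_ball, Complex.dist_eq, sub_zero, not_lt] at h1 h2
        exact (hg ζ h2 h1).continuousAt.continuousWithinAt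
      · obtain ⟨⟨h1, h2⟩, -⟩ := hζ
        simp only [mem_ball, mem_closedBall, Complex.dist_eq, sub_zero, not_le] at h1 h2
        exact hg ζ h2.le h1.le
    have := e2.symm.trans (e3.trans e1)
    field_simp at this
    exact this.symm


/-- The reversed polynomial `p*(z) = z^{deg p}·conj(p(1/conj z))`. -/
noncomputable def revPoly (p : Polynomial ℂ) : Polynomial ℂ :=
  (p.map (starRingEnd ℂ)).reverse

/-- **Proposition (analytic continuation of `G_n`, `D_n`, `J_n`).**
If `w′(θ) = f(e^{iθ})` with `f` analytic in a neighborhood `{r₀ < |ζ| < R}` of the unit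
circle, then `G_n`, `D_n`, `J_n` extend analytically from `{|z| > 1}` to `{|z| > r}` for
some `r < 1`. -/
theorem stmt_4
    (n : ℕ) (hn : 1 ≤ n)
    (w : ℝ → ℝ)
    (hwper : Function.Periodic w (2 * Real.pi))
    (hwpos : ∀ θ, 0 ≤ w θ)
    (hwcont : Continuous w)
    (hwdiff : ∀ θ ∈ Set.Ioo (0:ℝ) (2 * Real.pi), DifferentiableAt ℝ w θ)
    (hwint : IntegrableOn (deriv w) (Set.Ioo (0:ℝ) (2 * Real.pi)))
    (hwprob : (2 * Real.pi)⁻¹ * (∫ θ in (0:ℝ)..(2 * Real.pi), w θ) = 1)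
    (hsupp : {θ ∈ Set.Ico (0:ℝ) (2 * Real.pi) | 0 < w θ}.Infinite)
    (φ : ℕ → Polynomial ℂ) (κ : ℕ → ℝ)
    (hκ : ∀ k ≤ n, 0 < κ k)
    (hdeg : ∀ k ≤ n, (φ k).natDegree = k)
    (hlead : ∀ k ≤ n, (φ k).leadingCoeff = (κ k : ℂ))
    (horth : ∀ j ≤ n, ∀ k ≤ n,
      (2 * Real.pi : ℂ)⁻¹ * ∫ θ in (0:ℝ)..(2 * Real.pi),
          (φ j).eval (Complex.exp (θ * Complex.I))
            * (starRingEnd ℂ) ((φ k).eval (Complex.exp (θ * Complex.I))) * (w θ : ℂ)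
        = if j = k then 1 else 0)
    (G D J : ℂ → ℂ)
    (hG : ∀ z : ℂ, 1 < ‖z‖ → G z =
      Complex.I * (2 * Real.pi : ℂ)⁻¹ * ∫ θ in (0:ℝ)..(2 * Real.pi),
        ((‖(revPoly (φ (n - 1))).eval (Complex.exp (θ * Complex.I))‖ ^ 2
            * deriv w θ : ℝ) : ℂ) / (z - Complex.exp (θ * Complex.I)))
    (hD : ∀ z : ℂ, 1 < ‖z‖ → D z =
      -Complex.I * z * (2 * Real.pi : ℂ)⁻¹ * ∫ θ in (0:ℝ)..(2 * Real.pi),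
        ((revPoly (φ (n - 1))).eval (Complex.exp (θ * Complex.I))) ^ 2
          * ((deriv w θ : ℝ) : ℂ) * Complex.exp (-(n : ℂ) * θ * Complex.I)
          / (z - Complex.exp (θ * Complex.I)))
    (hJ : ∀ z : ℂ, 1 < ‖z‖ → J z =
      Complex.I * (2 * Real.pi : ℂ)⁻¹ * ∫ θ in (0:ℝ)..(2 * Real.pi),
        ((φ (n - 1)).eval (Complex.exp (θ * Complex.I))) ^ 2
          * ((deriv w θ : ℝ) : ℂ) * Complex.exp (-((n : ℂ) - 2) * θ * Complex.I)
          / (z - Complex.exp (θ * Complex.I)))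
    -- `w′(θ) = f(e^{iθ})` with `f` analytic in a neighborhood of the unit circle
    (r₀ R : ℝ) (hr₀ : 0 < r₀) (hr₀1 : r₀ < 1) (hR : 1 < R)
    (f : ℂ → ℂ)
    (hf : AnalyticOnNhd ℂ f {ζ : ℂ | r₀ < ‖ζ‖ ∧ ‖ζ‖ < R})
    (hwf : ∀ θ ∈ Set.Ioo (0:ℝ) (2 * Real.pi),
      ((deriv w θ : ℝ) : ℂ) = f (Complex.exp (θ * Complex.I))) :
    ∃ r : ℝ, 0 < r ∧ r < 1 ∧
      ∃ Gt Dt Jt : ℂ → ℂ,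
        AnalyticOnNhd ℂ Gt {z : ℂ | r < ‖z‖} ∧
        AnalyticOnNhd ℂ Dt {z : ℂ | r < ‖z‖} ∧
        AnalyticOnNhd ℂ Jt {z : ℂ | r < ‖z‖} ∧
        ∀ z : ℂ, 1 < ‖z‖ → Gt z = G z ∧ Dt z = D z ∧ Jt z = J z := by
  have htwo : (0:ℝ) < 2 * Real.pi := by positivity
  -- a.e. facts
  have hae : ∀ᵐ θ : ℝ, θ ≠ 2*Real.pi := by
    refine MeasureTheory.ae_iff.2 ?_
    simp only [ne_eq, not_not]
    exact Real.volume_singleton (a := 2*Real.pi)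
  have hIoo : ∀ θ : ℝ, θ ∈ Set.uIoc (0:ℝ) (2*Real.pi) → θ ≠ 2*Real.pi →
      θ ∈ Set.Ioo (0:ℝ) (2*Real.pi) := by
    intro θ hmem hne
    rw [Set.uIoc_of_le htwo.le] at hmem
    exact ⟨hmem.1, lt_of_le_of_ne hmem.2 hne⟩
  have hcm : ∀ θ : ℝ, circleMap 0 1 θ = Complex.exp (θ * Complex.I) := by
    intro θ; simp [circleMap]
  have habs1 : ∀ θ : ℝ, ‖Complex.exp (θ * Complex.I)‖ = 1 := by
    intro θ; exact_mod_cast Complex.norm_exp_ofReal_mul_I θ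
  have hinv : ∀ θ : ℝ, (Complex.exp (θ * Complex.I))⁻¹
      = (starRingEnd ℂ) (Complex.exp (θ * Complex.I)) := by
    intro θ
    have hn : Complex.normSq (Complex.exp (θ * Complex.I)) = 1 := by
      rw [Complex.normSq_eq_norm_sq, habs1 θ]; norm_num
    rw [Complex.inv_def, hn]; simp
  set q : Polynomial ℂ := revPoly (φ (n-1)) with hq
  set p : Polynomial ℂ := φ (n-1) with hp
  -- the three boundary functions
  set AG : ℂ → ℂ := fun ζ => q.eval ζ * (q.map (starRingEnd ℂ)).eval ζ⁻¹ * f ζ with hAGdef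
  set AD : ℂ → ℂ := fun ζ => (q.eval ζ)^2 * f ζ * ζ^(-(n:ℤ)) with hADdef
  set AJ : ℂ → ℂ := fun ζ => (p.eval ζ)^2 * f ζ * ζ^((2:ℤ)-(n:ℤ)) with hAJdef
  have hne0 : ∀ ζ : ℂ, r₀ < ‖ζ‖ → ζ ≠ 0 := by
    intro ζ h1 h
    rw [h] at h1; simp at h1; linarith
  have hAG : ∀ ζ : ℂ, r₀ < ‖ζ‖ → ‖ζ‖ < R → DifferentiableAt ℂ AG ζ := by
    intro ζ h1 h2
    have hζ0 := hne0 ζ h1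
    refine ((q.differentiableAt.mul ?_).mul (hf ζ ⟨h1, h2⟩).differentiableAt)
    exact ((q.map (starRingEnd ℂ)).differentiableAt).comp ζ (differentiableAt_inv hζ0)
  have hAD : ∀ ζ : ℂ, r₀ < ‖ζ‖ → ‖ζ‖ < R → DifferentiableAt ℂ AD ζ := by
    intro ζ h1 h2
    exact ((q.differentiableAt.pow 2).mul (hf ζ ⟨h1, h2⟩).differentiableAt).mul
      (differentiableAt_zpow.2 (Or.inl (hne0 ζ h1)))
  have hAJ : ∀ ζ : ℂ, r₀ < ‖ζ‖ → ‖ζ‖ < R → DifferentiableAt ℂ AJ ζ := by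
    intro ζ h1 h2
    exact ((p.differentiableAt.pow 2).mul (hf ζ ⟨h1, h2⟩).differentiableAt).mul
      (differentiableAt_zpow.2 (Or.inl (hne0 ζ h1)))
  obtain ⟨TG, hTGa, hTGe⟩ := main_ext r₀ R hr₀ hr₀1 hR AG hAG
  obtain ⟨TD, hTDa, hTDe⟩ := main_ext r₀ R hr₀ hr₀1 hR AD hAD
  obtain ⟨TJ, hTJa, hTJe⟩ := main_ext r₀ R hr₀ hr₀1 hR AJ hAJ
  refine ⟨(r₀+1)/2, by linarith, by linarith,
    fun z => Complex.I * (2*Real.pi:ℂ)⁻¹ * TG z,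
    fun z => -Complex.I * z * (2*Real.pi:ℂ)⁻¹ * TD z,
    fun z => Complex.I * (2*Real.pi:ℂ)⁻¹ * TJ z,
    analyticOnNhd_const.mul hTGa,
    ((analyticOnNhd_const.mul analyticOnNhd_id).mul analyticOnNhd_const).mul hTDa,
    analyticOnNhd_const.mul hTJa,
    fun z hz => ⟨?_, ?_, ?_⟩⟩
  · -- G
    beta_reduce
    rw [hG z hz, hTGe z hz]
    congr 1
    refine intervalIntegral.integral_congr_ae ?_
    filter_upwards [hae] with θ hθ2 hθmem
    have hθIoo := hIoo θ hθmem hθ2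
    have key : ((‖q.eval (Complex.exp (θ * Complex.I))‖ ^ 2 * deriv w θ : ℝ) : ℂ)
        = AG (Complex.exp (θ * Complex.I)) := by
      rw [Complex.ofReal_mul, hwf θ hθIoo, hAGdef]
      congr 1
      have h1 : (((‖q.eval (Complex.exp (θ * Complex.I))‖)^2 : ℝ) : ℂ)
          = q.eval (Complex.exp (θ * Complex.I))
            * (starRingEnd ℂ) (q.eval (Complex.exp (θ * Complex.I))) := by
        rw [← Complex.normSq_eq_norm_sq]; exact (Complex.mul_conj _).symm
      rw [h1, hinv θ, Polynomial.eval_map, Polynomial.eval₂_at_apply]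
    simp only [hcm θ, key]
  · -- D
    beta_reduce
    rw [hD z hz, hTDe z hz]
    congr 1
    refine intervalIntegral.integral_congr_ae ?_
    filter_upwards [hae] with θ hθ2 hθmem
    have hθIoo := hIoo θ hθmem hθ2
    have hexp : Complex.exp (-(n:ℂ) * θ * Complex.I)
        = (Complex.exp (θ * Complex.I)) ^ (-(n:ℤ)) := by
      rw [← Complex.exp_int_mul]; congr 1; push_cast; ring
    simp only [hcm θ, hADdef]
    rw [hwf θ hθIoo, hexp]
  · -- J
    beta_reduce
    rw [hJ z hz, hTJe z hz]
    congr 1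
    refine intervalIntegral.integral_congr_ae ?_
    filter_upwards [hae] with θ hθ2 hθmem
    have hθIoo := hIoo θ hθmem hθ2
    have hexp : Complex.exp (-((n:ℂ)-2) * θ * Complex.I)
        = (Complex.exp (θ * Complex.I)) ^ ((2:ℤ)-(n:ℤ)) := by
      rw [← Complex.exp_int_mul]; congr 1; push_cast; ring
    simp only [hcm θ, hAJdef]
    rw [hwf θ hθIoo, hexp]
end

section
/- Suppose in addition that w′(θ) = f(e^{iθ}) for all θ ∈ (0,2π), where f = p/q is a rational function (p, q polynomials with complex coefficients, q not identically zero) having no poles on the unit circle. Then there exist rational functions R_G, R_D, R_J such that R_G(z) = G_n(z), R_D(z) = D_n(z), and R_J(z) = J_n(z) for all z with |z| > 1, and each of R_G, R_D, R_J has no poles in ℂ other than possibly at 0 and at the poles of f lying in the open unit disk {z : |z| < 1}. -/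
open Complex Polynomial MeasureTheory Metric intervalIntegral

namespace Stmt5

noncomputable def uc (θ : ℝ) : ℂ := Complex.exp ((θ : ℂ) * Complex.I)

lemma uc_ne_zero (θ : ℝ) : uc θ ≠ 0 := Complex.exp_ne_zero _

lemma abs_uc (θ : ℝ) : ‖uc θ‖ = 1 := by
  simp [uc, Complex.norm_exp]

lemma uc_sub_ne (θ : ℝ) {c : ℂ} (hc : ‖c‖ ≠ 1) : uc θ - c ≠ 0 := by
  intro h
  rw [sub_eq_zero] at h
  exact hc (h ▸ abs_uc θ)

lemma sub_uc_ne {z : ℂ} (hz : 1 < ‖z‖) (θ : ℝ) : z - uc θ ≠ 0 := by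
  intro h
  rw [sub_eq_zero] at h
  rw [h, abs_uc] at hz
  exact lt_irrefl _ hz

lemma continuous_uc : Continuous uc :=
  Complex.continuous_exp.comp (by continuity)

noncomputable def bf (m : ℤ) (k : ℕ) (c : ℂ) : ℝ → ℂ :=
  fun θ => uc θ ^ m * ((uc θ - c) ^ k)⁻¹

lemma bf_cont {c : ℂ} (hc : ‖c‖ ≠ 1) (m : ℤ) (k : ℕ) :
    Continuous (bf m k c) := by
  apply Continuous.mul
  · exact continuous_uc.zpow₀ m fun a => Or.inl (uc_ne_zero a)
  · exact ((continuous_uc.sub continuous_const).pow k).inv₀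
      fun θ => pow_ne_zero _ (uc_sub_ne θ hc)

noncomputable def Iint (h : ℝ → ℂ) : ℂ → ℂ :=
  fun z => ∫ θ in (0:ℝ)..(2 * Real.pi), h θ / (z - uc θ)

lemma kernel_cont {h : ℝ → ℂ} (hc : Continuous h) {z : ℂ} (hz : 1 < ‖z‖) :
    Continuous fun θ => h θ / (z - uc θ) :=
  hc.div (continuous_const.sub continuous_uc) (sub_uc_ne hz)

def QR (S : Set ℂ) (F : ℂ → ℂ) : Prop :=
  ∃ A B : Polynomial ℂ, B ≠ 0 ∧ (∀ z, B.eval z = 0 → z = 0 ∨ z ∈ S) ∧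
    ∀ z : ℂ, 1 < ‖z‖ → F z = A.eval z / B.eval z

lemma eval_ne_of_poles {S : Set ℂ} (hS : S ⊆ ball (0:ℂ) 1) {B : Polynomial ℂ}
    (hB : ∀ z, B.eval z = 0 → z = 0 ∨ z ∈ S) {z : ℂ} (hz : 1 < ‖z‖) :
    B.eval z ≠ 0 := by
  intro h
  rcases hB z h with rfl | hzS
  · rw [norm_zero] at hz; linarith
  · have := hS hzS
    rw [mem_ball_zero_iff] at this
    linarith

lemma QR.congr {S : Set ℂ} {F G : ℂ → ℂ} (h : QR S G)
    (he : ∀ z : ℂ, 1 < ‖z‖ → F z = G z) : QR S F := by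
  obtain ⟨A, B, h1, h2, h3⟩ := h
  exact ⟨A, B, h1, h2, fun z hz => (he z hz).trans (h3 z hz)⟩

lemma QR.const (S : Set ℂ) (a : ℂ) : QR S (fun _ => a) :=
  ⟨Polynomial.C a, 1, one_ne_zero, by simp, by simp⟩

lemma QR.smul {S : Set ℂ} {F : ℂ → ℂ} (a : ℂ) (h : QR S F) :
    QR S (fun z => a * F z) := by
  obtain ⟨A, B, h1, h2, h3⟩ := h
  exact ⟨Polynomial.C a * A, B, h1, h2, fun z hz => by
    show a * F z = _
    rw [h3 z hz, Polynomial.eval_mul, Polynomial.eval_C, mul_div_assoc]⟩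

lemma QR.add {S : Set ℂ} (hS : S ⊆ ball (0:ℂ) 1) {F G : ℂ → ℂ}
    (hF : QR S F) (hG : QR S G) : QR S (fun z => F z + G z) := by
  obtain ⟨A₁, B₁, h1, h2, h3⟩ := hF
  obtain ⟨A₂, B₂, g1, g2, g3⟩ := hG
  refine ⟨A₁ * B₂ + A₂ * B₁, B₁ * B₂, mul_ne_zero h1 g1, ?_, ?_⟩
  · intro z hz
    rw [Polynomial.eval_mul, mul_eq_zero] at hz
    rcases hz with hz | hz
    · exact h2 z hz
    · exact g2 z hz
  · intro z hz
    have hB₁ := eval_ne_of_poles hS h2 hz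
    have hB₂ := eval_ne_of_poles hS g2 hz
    show F z + G z = _
    rw [h3 z hz, g3 z hz]
    simp only [Polynomial.eval_add, Polynomial.eval_mul]
    field_simp

lemma QR.sub {S : Set ℂ} (hS : S ⊆ ball (0:ℂ) 1) {F G : ℂ → ℂ}
    (hF : QR S F) (hG : QR S G) : QR S (fun z => F z - G z) := by
  have := QR.add hS hF (QR.smul (-1) hG)
  exact QR.congr this (fun z hz => by show F z - G z = F z + -1 * G z; ring)

lemma QR.div_sub {S : Set ℂ} {F : ℂ → ℂ} {c : ℂ} (hc : c = 0 ∨ c ∈ S)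
    (h : QR S F) : QR S (fun z => F z / (z - c)) := by
  obtain ⟨A, B, h1, h2, h3⟩ := h
  refine ⟨A, B * (Polynomial.X - Polynomial.C c), mul_ne_zero h1 (Polynomial.X_sub_C_ne_zero c), ?_, ?_⟩
  · intro z hz
    rw [Polynomial.eval_mul, mul_eq_zero] at hz
    rcases hz with hz | hz
    · exact h2 z hz
    · simp only [Polynomial.eval_sub, Polynomial.eval_X, Polynomial.eval_C, sub_eq_zero] at hz
      subst hz
      exact hc
  · intro z hz
    show F z / (z - c) = _
    rw [h3 z hz, Polynomial.eval_mul]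
    simp only [Polynomial.eval_sub, Polynomial.eval_X, Polynomial.eval_C]
    rw [div_div]

lemma Iint_congr {f g : ℝ → ℂ} (h : ∀ θ, f θ = g θ) : Iint f = Iint g := by
  rw [funext h]

lemma closure_unit_ball : closure (ball (0:ℂ) 1) = closedBall (0:ℂ) 1 :=
  closure_ball (0:ℂ) one_ne_zero

lemma cauchy_kernel {g : ℂ → ℂ} (hd : DifferentiableOn ℂ g (ball (0:ℂ) 1))
    (hcont : ContinuousOn g (closedBall (0:ℂ) 1))
    {z : ℂ} (hz : 1 < ‖z‖) :
    Iint (fun θ => g (uc θ)) z = 2 * Real.pi * g 0 / z := by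
  have hzb : ∀ w : ℂ, w ∈ closedBall (0:ℂ) 1 → z - w ≠ 0 := by
    intro w hw h
    rw [mem_closedBall_zero_iff] at hw
    rw [sub_eq_zero] at h
    rw [← h] at hw
    linarith
  set f : ℂ → ℂ := fun w => g w * (z - w)⁻¹ with hf
  have hfd : DiffContOnCl ℂ f (ball (0:ℂ) 1) := by
    constructor
    · apply hd.mul
      apply DifferentiableOn.inv
      · exact (differentiable_const z).differentiableOn.sub differentiable_id.differentiableOn
      · exact fun x hx => hzb x (ball_subset_closedBall hx)
    · rw [closure_unit_ball]
      apply hcont.mul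
      apply ContinuousOn.inv₀
      · exact (continuous_const.sub continuous_id).continuousOn
      · exact hzb
  have key := hfd.circleIntegral_sub_inv_smul (w := 0) (by simp)
  rw [circleIntegral] at key
  simp only [deriv_circleMap, circleMap, ofReal_one, one_mul, zero_add, sub_zero,
    smul_eq_mul] at key
  have h1 : ∀ θ : ℝ, Complex.exp (θ * I) * I * ((Complex.exp (θ * I))⁻¹ * f (Complex.exp (θ * I)))
      = I * (g (uc θ) / (z - uc θ)) := by
    intro θ
    have h0 := uc_ne_zero θ
    have h2 := sub_uc_ne hz θ
    rw [hf]
    simp only [uc] at h0 h2 ⊢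
    field_simp
  rw [intervalIntegral.integral_congr (g := fun θ => I * (g (uc θ) / (z - uc θ)))
    (fun θ _ => h1 θ)] at key
  rw [intervalIntegral.integral_const_mul] at key
  have hI : (I : ℂ) ≠ 0 := I_ne_zero
  have key2 : I * Iint (fun θ => g (uc θ)) z = I * (2 * Real.pi * g 0 / z) := by
    rw [Iint]
    rw [key, hf]
    have : z - (0:ℂ) ≠ 0 := by
      intro h; rw [sub_zero] at h; rw [h] at hz; simp at hz; linarith
    rw [sub_zero] at this
    field_simp
    ring
  exact mul_left_cancel₀ hI key2

lemma Iint_add {h1 h2 : ℝ → ℂ} (hc1 : Continuous h1) (hc2 : Continuous h2)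
    {z : ℂ} (hz : 1 < ‖z‖) :
    Iint (fun θ => h1 θ + h2 θ) z = Iint h1 z + Iint h2 z := by
  simp only [Iint]
  rw [← intervalIntegral.integral_add ((kernel_cont hc1 hz).intervalIntegrable _ _)
    ((kernel_cont hc2 hz).intervalIntegrable _ _)]
  apply intervalIntegral.integral_congr
  intro θ _
  simp only [add_div]

lemma Iint_smul (a : ℂ) (h : ℝ → ℂ) (z : ℂ) :
    Iint (fun θ => a * h θ) z = a * Iint h z := by
  simp only [Iint]
  rw [← intervalIntegral.integral_const_mul]
  apply intervalIntegral.integral_congr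
  intro θ _
  simp only [mul_div_assoc]

lemma Iint_sub {h1 h2 : ℝ → ℂ} (hc1 : Continuous h1) (hc2 : Continuous h2)
    {z : ℂ} (hz : 1 < ‖z‖) :
    Iint (fun θ => h1 θ - h2 θ) z = Iint h1 z - Iint h2 z := by
  simp only [Iint]
  rw [← intervalIntegral.integral_sub ((kernel_cont hc1 hz).intervalIntegrable _ _)
    ((kernel_cont hc2 hz).intervalIntegrable _ _)]
  apply intervalIntegral.integral_congr
  intro θ _
  simp only [sub_div]

/-- Kernel-splitting recursion for poles inside the disk. -/
lemma Iint_bf_succ {c : ℂ} (hc : ‖c‖ ≠ 1) (m : ℤ) (k : ℕ) {z : ℂ}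
    (hz : 1 < ‖z‖) (hzc : z - c ≠ 0) :
    Iint (bf m (k+1) c) z
      = ((∫ θ in (0:ℝ)..(2 * Real.pi), bf m (k+1) c θ) + Iint (bf m k c) z) / (z - c) := by
  have key : Iint (bf m (k+1) c) z
      = (z - c)⁻¹ * ((∫ θ in (0:ℝ)..(2 * Real.pi), bf m (k+1) c θ) + Iint (bf m k c) z) := by
    have hpt : ∀ θ : ℝ, bf m (k+1) c θ / (z - uc θ)
        = (z - c)⁻¹ * (bf m (k+1) c θ + bf m k c θ / (z - uc θ)) := by
      intro θ
      have h1 := uc_sub_ne θ hc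
      have h2 := sub_uc_ne hz θ
      have hB : bf m k c θ = bf m (k+1) c θ * (uc θ - c) := by
        simp only [bf, pow_succ, mul_inv, mul_assoc]
        rw [inv_mul_cancel₀ h1, mul_one]
      rw [hB]
      generalize bf m (k+1) c θ = a
      field_simp
      ring
    have hint : Iint (bf m (k+1) c) z
        = ∫ θ in (0:ℝ)..(2 * Real.pi), (z - c)⁻¹ * (bf m (k+1) c θ + bf m k c θ / (z - uc θ)) := by
      simp only [Iint]
      exact intervalIntegral.integral_congr fun θ _ => hpt θ
    rw [hint, intervalIntegral.integral_const_mul]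
    congr 1
    rw [intervalIntegral.integral_add ((bf_cont hc m (k+1)).intervalIntegrable _ _)
      ((kernel_cont (bf_cont hc m k) hz).intervalIntegrable _ _)]
    rfl
  rw [key, div_eq_inv_mul]

/-- Negative-exponent recursion for poles outside the disk. -/
lemma Iint_bf_negm {c : ℂ} (hc : ‖c‖ ≠ 1) (hc0 : c ≠ 0) (j : ℕ) (k : ℕ) {z : ℂ}
    (hz : 1 < ‖z‖) :
    Iint (bf (-(j+1 : ℕ) : ℤ) (k+1) c) z
      = c⁻¹ * (Iint (bf (-(j : ℕ) : ℤ) (k+1) c) z - Iint (bf (-(j+1 : ℕ) : ℤ) k c) z) := by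
  have hpt : ∀ θ : ℝ, bf (-(j+1 : ℕ) : ℤ) (k+1) c θ / (z - uc θ)
      = c⁻¹ * (bf (-(j : ℕ) : ℤ) (k+1) c θ / (z - uc θ) - bf (-(j+1 : ℕ) : ℤ) k c θ / (z - uc θ)) := by
    intro θ
    have h0 := uc_ne_zero θ
    have h1 := uc_sub_ne θ hc
    have h2 := sub_uc_ne hz θ
    have hB1 : bf (-(j : ℕ) : ℤ) (k+1) c θ = bf (-(j+1 : ℕ) : ℤ) (k+1) c θ * uc θ := by
      have e : (uc θ) ^ (-(j : ℕ) : ℤ) = (uc θ) ^ (-(j+1 : ℕ) : ℤ) * uc θ := by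
        rw [← zpow_add_one₀ (uc_ne_zero θ)]
        congr 1
        push_cast
        ring
      simp only [bf]
      rw [e]
      ring
    have hB2 : bf (-(j+1 : ℕ) : ℤ) k c θ = bf (-(j+1 : ℕ) : ℤ) (k+1) c θ * (uc θ - c) := by
      simp only [bf, pow_succ, mul_inv, mul_assoc]
      rw [inv_mul_cancel₀ h1, mul_one]
    rw [hB1, hB2]
    generalize bf (-(j+1 : ℕ) : ℤ) (k+1) c θ = a
    field_simp
    ring
  have : Iint (bf (-(j+1 : ℕ) : ℤ) (k+1) c) z
      = ∫ θ in (0:ℝ)..(2 * Real.pi),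
          c⁻¹ * (bf (-(j : ℕ) : ℤ) (k+1) c θ / (z - uc θ) - bf (-(j+1 : ℕ) : ℤ) k c θ / (z - uc θ)) := by
    simp only [Iint]
    exact intervalIntegral.integral_congr fun θ _ => hpt θ
  rw [this, intervalIntegral.integral_const_mul]
  congr 1
  rw [intervalIntegral.integral_sub ((kernel_cont (bf_cont hc _ _) hz).intervalIntegrable _ _)
    ((kernel_cont (bf_cont hc _ _) hz).intervalIntegrable _ _)]
  rfl

lemma QR_const_div_X (S : Set ℂ) (a : ℂ) : QR S (fun z => a / z) := by
  refine ⟨Polynomial.C a, Polynomial.X, Polynomial.X_ne_zero, ?_, ?_⟩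
  · intro z hz
    simp only [Polynomial.eval_X] at hz
    exact Or.inl hz
  · intro z hz
    simp

/-- Cauchy-formula case: `g` holomorphic near the closed disk. -/
lemma QR_cauchy (S : Set ℂ) {g : ℂ → ℂ} (hd : DifferentiableOn ℂ g (ball (0:ℂ) 1))
    (hcont : ContinuousOn g (closedBall (0:ℂ) 1)) :
    QR S (Iint (fun θ => g (uc θ))) := by
  apply QR.congr (QR_const_div_X S (2 * Real.pi * g 0))
  intro z hz
  rw [cauchy_kernel hd hcont hz]

lemma QR_exp_nonneg (S : Set ℂ) (k : ℕ) : QR S (Iint (fun θ => uc θ ^ (k : ℤ))) := by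
  have : QR S (Iint (fun θ => (fun w : ℂ => w ^ k) (uc θ))) :=
    QR_cauchy S (differentiable_pow (𝕜 := ℂ) k).differentiableOn (differentiable_pow (𝕜 := ℂ) k).continuous.continuousOn
  apply QR.congr this
  intro z hz
  rw [Iint_congr (g := fun θ => (fun w : ℂ => w ^ k) (uc θ)) (fun θ => by
    simp [zpow_natCast])]

lemma QR_exp_neg {S : Set ℂ} (hS : S ⊆ ball (0:ℂ) 1) :
    ∀ j : ℕ, QR S (Iint (fun θ => uc θ ^ (-(j : ℕ) : ℤ))) := by
  intro j
  induction j with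
  | zero =>
    have := QR_exp_nonneg S 0
    apply QR.congr this
    intro z hz
    rw [Iint_congr (g := fun θ => uc θ ^ ((0:ℕ) : ℤ)) (fun θ => by norm_num)]
  | succ j ih =>
    -- recursion: Iint (u^{-(j+1)}) z = (W + Iint (u^{-j}) z) / z
    set W : ℂ := ∫ θ in (0:ℝ)..(2 * Real.pi), uc θ ^ (-(j+1 : ℕ) : ℤ) with hW
    have hcont : Continuous fun θ => uc θ ^ (-(j+1 : ℕ) : ℤ) :=
      continuous_uc.zpow₀ _ fun a => Or.inl (uc_ne_zero a)
    have hcont' : Continuous fun θ => uc θ ^ (-(j : ℕ) : ℤ) :=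
      continuous_uc.zpow₀ _ fun a => Or.inl (uc_ne_zero a)
    have hrec : ∀ z : ℂ, 1 < ‖z‖ →
        Iint (fun θ => uc θ ^ (-(j+1 : ℕ) : ℤ)) z
          = (W + Iint (fun θ => uc θ ^ (-(j : ℕ) : ℤ)) z) / (z - 0) := by
      intro z hz
      have hz0 : z ≠ 0 := by
        intro h; rw [h] at hz; simp at hz; linarith
      have hpt : ∀ θ : ℝ, uc θ ^ (-(j+1 : ℕ) : ℤ) / (z - uc θ)
          = z⁻¹ * (uc θ ^ (-(j+1 : ℕ) : ℤ) + uc θ ^ (-(j : ℕ) : ℤ) / (z - uc θ)) := by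
        intro θ
        have h2 := sub_uc_ne hz θ
        have e : (uc θ) ^ (-(j : ℕ) : ℤ) = (uc θ) ^ (-(j+1 : ℕ) : ℤ) * uc θ := by
          rw [← zpow_add_one₀ (uc_ne_zero θ)]
          congr 1
          push_cast
          ring
        rw [e]
        generalize (uc θ) ^ (-(j+1 : ℕ) : ℤ) = a
        field_simp
        ring
      have : Iint (fun θ => uc θ ^ (-(j+1 : ℕ) : ℤ)) z
          = ∫ θ in (0:ℝ)..(2 * Real.pi),
              z⁻¹ * (uc θ ^ (-(j+1 : ℕ) : ℤ) + uc θ ^ (-(j : ℕ) : ℤ) / (z - uc θ)) := by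
        simp only [Iint]
        exact intervalIntegral.integral_congr fun θ _ => hpt θ
      rw [this, intervalIntegral.integral_const_mul, sub_zero, div_eq_inv_mul]
      congr 1
      rw [intervalIntegral.integral_add (hcont.intervalIntegrable _ _)
        ((kernel_cont hcont' hz).intervalIntegrable _ _)]
      rfl
    have h1 : QR S (fun z => W + Iint (fun θ => uc θ ^ (-(j : ℕ) : ℤ)) z) :=
      QR.add hS (QR.const S W) ih
    exact QR.congr (QR.div_sub (Or.inl rfl) h1) hrec

lemma QR_exp_all {S : Set ℂ} (hS : S ⊆ ball (0:ℂ) 1) (m : ℤ) :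
    QR S (Iint (fun θ => uc θ ^ m)) := by
  rcases le_or_gt 0 m with hm | hm
  · have := QR_exp_nonneg S m.toNat
    apply QR.congr this
    intro z hz
    rw [Iint_congr (g := fun θ => uc θ ^ ((m.toNat : ℕ) : ℤ)) (fun θ => by
      rw [Int.toNat_of_nonneg hm])]
  · have hj : m = -(((-m).toNat : ℕ) : ℤ) := by omega
    have := QR_exp_neg hS (-m).toNat
    apply QR.congr this
    intro z hz
    rw [Iint_congr (g := fun θ => uc θ ^ (-(((-m).toNat : ℕ)) : ℤ)) (fun θ => by
      rw [← hj])]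

lemma bf_zero_k (m : ℤ) (c : ℂ) : bf m 0 c = fun θ => uc θ ^ m := by
  funext θ
  simp [bf]

lemma QR_bf_lt {S : Set ℂ} (hS : S ⊆ ball (0:ℂ) 1) {c : ℂ} (hc : ‖c‖ < 1)
    (hcS : c ∈ S) (k : ℕ) (m : ℤ) : QR S (Iint (bf m k c)) := by
  have hc1 : ‖c‖ ≠ 1 := ne_of_lt hc
  induction k with
  | zero => rw [bf_zero_k]; exact QR_exp_all hS m
  | succ k ih =>
    set V : ℂ := ∫ θ in (0:ℝ)..(2 * Real.pi), bf m (k+1) c θ with hV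
    have h1 : QR S (fun z => V + Iint (bf m k c) z) := QR.add hS (QR.const S V) ih
    apply QR.congr (QR.div_sub (Or.inr hcS) h1)
    intro z hz
    have hzc : z - c ≠ 0 := by
      intro h
      rw [sub_eq_zero] at h
      rw [h] at hz
      linarith
    exact Iint_bf_succ hc1 m k hz hzc

lemma QR_bf_gt_nonneg (S : Set ℂ) {c : ℂ} (hc : 1 < ‖c‖) (k : ℕ) (j : ℕ) :
    QR S (Iint (bf (j : ℤ) k c)) := by
  set g : ℂ → ℂ := fun w => w ^ j * ((w - c) ^ k)⁻¹ with hg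
  have hne : ∀ w : ℂ, w ∈ closedBall (0:ℂ) 1 → (w - c) ^ k ≠ 0 := by
    intro w hw
    apply pow_ne_zero
    intro h
    rw [sub_eq_zero] at h
    rw [mem_closedBall_zero_iff, h] at hw
    linarith
  have hd : DifferentiableOn ℂ g (ball (0:ℂ) 1) := by
    apply DifferentiableOn.mul (differentiable_pow j).differentiableOn
    apply DifferentiableOn.inv
    · exact (DifferentiableOn.sub differentiable_id.differentiableOn
        (differentiable_const c).differentiableOn).pow k
    · exact fun x hx => hne x (ball_subset_closedBall hx)
  have hcont : ContinuousOn g (closedBall (0:ℂ) 1) := by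
    apply ContinuousOn.mul (continuous_pow j).continuousOn
    apply ContinuousOn.inv₀
    · exact ((continuous_id.sub continuous_const).pow k).continuousOn
    · exact hne
  have := QR_cauchy S hd hcont
  apply QR.congr this
  intro z hz
  rw [Iint_congr (g := fun θ => g (uc θ)) (fun θ => by
    simp only [hg, bf, zpow_natCast])]

lemma QR_bf_gt {S : Set ℂ} (hS : S ⊆ ball (0:ℂ) 1) {c : ℂ} (hc : 1 < ‖c‖)
    (k : ℕ) (m : ℤ) : QR S (Iint (bf m k c)) := by
  have hc1 : ‖c‖ ≠ 1 := ne_of_gt hc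
  have hc0 : c ≠ 0 := by
    intro h
    rw [h] at hc
    simp at hc
    linarith
  induction k generalizing m with
  | zero => rw [bf_zero_k]; exact QR_exp_all hS m
  | succ k ih =>
    rcases le_or_gt 0 m with hm | hm
    · have := QR_bf_gt_nonneg S hc (k+1) m.toNat
      apply QR.congr this
      intro z hz
      rw [Iint_congr (g := bf ((m.toNat : ℕ) : ℤ) (k+1) c) (fun θ => by
        rw [Int.toNat_of_nonneg hm])]
    · -- m < 0 : inner induction on |m|
      have key : ∀ j : ℕ, QR S (Iint (bf (-(j : ℕ) : ℤ) (k+1) c)) := by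
        intro j
        induction j with
        | zero =>
          have := QR_bf_gt_nonneg S hc (k+1) 0
          apply QR.congr this
          intro z hz
          rw [Iint_congr (g := bf ((0:ℕ) : ℤ) (k+1) c) (fun θ => by norm_num)]
        | succ j ihj =>
          have hrec := fun (z : ℂ) (hz : 1 < ‖z‖) =>
            Iint_bf_negm hc1 hc0 j k hz
          have h1 : QR S (fun z => Iint (bf (-(j : ℕ) : ℤ) (k+1) c) z
              - Iint (bf (-(j+1 : ℕ) : ℤ) k c) z) := QR.sub hS ihj (ih _)
          exact QR.congr (QR.smul c⁻¹ h1) hrec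
      have hj : m = -(((-m).toNat : ℕ) : ℤ) := by omega
      have := key (-m).toNat
      apply QR.congr this
      intro z hz
      rw [Iint_congr (g := bf (-(((-m).toNat : ℕ)) : ℤ) (k+1) c) (fun θ => by rw [← hj])]

lemma QR_bf {S : Set ℂ} (hS : S ⊆ ball (0:ℂ) 1) {c : ℂ} (hc : ‖c‖ ≠ 1)
    (hcS : ‖c‖ < 1 → c ∈ S) (k : ℕ) (m : ℤ) : QR S (Iint (bf m k c)) := by
  rcases lt_or_gt_of_ne hc with h | h
  · exact QR_bf_lt hS h (hcS h) k m
  · exact QR_bf_gt hS h k m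

inductive Rep (S : Set ℂ) : (ℝ → ℂ) → Prop
  | basis (m : ℤ) (k : ℕ) (c : ℂ) (h1 : ‖c‖ ≠ 1)
      (h2 : ‖c‖ < 1 → c ∈ S) : Rep S (bf m k c)
  | add {f g : ℝ → ℂ} : Rep S f → Rep S g → Rep S (f + g)
  | smul (a : ℂ) {f : ℝ → ℂ} : Rep S f → Rep S (a • f)

lemma Rep.of_eq {S : Set ℂ} {f g : ℝ → ℂ} (h : Rep S f) (he : ∀ θ, f θ = g θ) :
    Rep S g := (funext he : f = g) ▸ h

lemma Rep.cont {S : Set ℂ} {f : ℝ → ℂ} (h : Rep S f) : Continuous f := by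
  induction h with
  | basis m k c h1 h2 => exact bf_cont h1 m k
  | add hf hg ihf ihg => exact ihf.add ihg
  | smul a hf ihf => exact ihf.const_smul a

lemma rep_one (S : Set ℂ) : Rep S (fun _ => (1:ℂ)) := by
  have h := Rep.basis (S := S) 0 0 2 (by
    rw [Complex.norm_two]; norm_num) (by rw [Complex.norm_two]; intro h; linarith)
  exact h.of_eq fun θ => by simp [bf]

lemma Rep.mul_u {S : Set ℂ} {f : ℝ → ℂ} (h : Rep S f) :
    Rep S (fun θ => uc θ * f θ) := by
  induction h with
  | basis m k c h1 h2 =>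
    apply (Rep.basis (m+1) k c h1 h2).of_eq
    intro θ
    simp only [bf]
    rw [zpow_add_one₀ (uc_ne_zero θ)]
    ring
  | add hf hg ihf ihg =>
    exact (ihf.add ihg).of_eq fun θ => by
      simp only [Pi.add_apply]
      ring
  | smul a hf ihf =>
    exact (Rep.smul a ihf).of_eq fun θ => by
      simp only [Pi.smul_apply, smul_eq_mul]
      ring

lemma Rep.mul_uinv {S : Set ℂ} {f : ℝ → ℂ} (h : Rep S f) :
    Rep S (fun θ => (uc θ)⁻¹ * f θ) := by
  induction h with
  | basis m k c h1 h2 =>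
    apply (Rep.basis (m-1) k c h1 h2).of_eq
    intro θ
    simp only [bf]
    rw [zpow_sub_one₀ (uc_ne_zero θ)]
    ring
  | add hf hg ihf ihg =>
    exact (ihf.add ihg).of_eq fun θ => by
      simp only [Pi.add_apply]
      ring
  | smul a hf ihf =>
    exact (Rep.smul a ihf).of_eq fun θ => by
      simp only [Pi.smul_apply, smul_eq_mul]
      ring

lemma Rep.mul_zpow {S : Set ℂ} (m : ℤ) {f : ℝ → ℂ} (h : Rep S f) :
    Rep S (fun θ => uc θ ^ m * f θ) := by
  induction m using Int.induction_on with
  | zero => exact h.of_eq fun θ => by simp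
  | succ i ih =>
    exact ih.mul_u.of_eq fun θ => by
      rw [zpow_add_one₀ (uc_ne_zero θ)]
      ring
  | pred i ih =>
    exact ih.mul_uinv.of_eq fun θ => by
      rw [zpow_sub_one₀ (uc_ne_zero θ)]
      ring

lemma Rep.div_lin {S : Set ℂ} {a : ℂ} (ha1 : ‖a‖ ≠ 1)
    (ha2 : ‖a‖ < 1 → a ∈ S) {f : ℝ → ℂ} (h : Rep S f) :
    Rep S (fun θ => f θ * (uc θ - a)⁻¹) := by
  induction h with
  | basis m k c h1 h2 =>
    by_cases hac : a = c
    · subst hac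
      apply (Rep.basis m (k+1) a h1 h2).of_eq
      intro θ
      simp only [bf, pow_succ, mul_inv]
      ring
    · induction k with
      | zero =>
        apply (Rep.basis m 1 a ha1 ha2).of_eq
        intro θ
        simp only [bf, pow_one, pow_zero, inv_one, mul_one]
      | succ k ihk =>
        have hca : a - c ≠ 0 := sub_ne_zero.mpr hac
        have step := Rep.add (Rep.smul ((a-c)⁻¹) ihk)
          (Rep.smul (-(a-c)⁻¹) (Rep.basis m (k+1) c h1 h2))
        apply step.of_eq
        intro θ
        simp only [Pi.add_apply, Pi.smul_apply, smul_eq_mul]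
        have h1' := uc_sub_ne θ h1
        have ha' := uc_sub_ne θ ha1
        have hB : bf m k c θ = bf m (k+1) c θ * (uc θ - c) := by
          simp only [bf, pow_succ, mul_inv, mul_assoc]
          rw [inv_mul_cancel₀ h1', mul_one]
        rw [hB]
        generalize bf m (k+1) c θ = A
        field_simp
        ring
  | add hf hg ihf ihg =>
    exact (ihf.add ihg).of_eq fun θ => by
      simp only [Pi.add_apply]
      ring
  | smul b hf ihf =>
    exact (Rep.smul b ihf).of_eq fun θ => by
      simp only [Pi.smul_apply, smul_eq_mul]
      ring

lemma Rep.div_pow {S : Set ℂ} {c : ℂ} (hc1 : ‖c‖ ≠ 1)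
    (hc2 : ‖c‖ < 1 → c ∈ S) (k : ℕ) {f : ℝ → ℂ} (h : Rep S f) :
    Rep S (fun θ => f θ * ((uc θ - c) ^ k)⁻¹) := by
  induction k with
  | zero => exact h.of_eq fun θ => by simp
  | succ k ih =>
    apply (ih.div_lin hc1 hc2).of_eq
    intro θ
    simp only [pow_succ, mul_inv]
    ring

lemma Rep.mul {S : Set ℂ} {f g : ℝ → ℂ} (hf : Rep S f) (hg : Rep S g) :
    Rep S (fun θ => f θ * g θ) := by
  induction hf with
  | basis m k c h1 h2 =>
    apply (Rep.mul_zpow m (hg.div_pow h1 h2 k)).of_eq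
    intro θ
    simp only [bf]
    ring
  | add hf₁ hf₂ ih₁ ih₂ =>
    exact (ih₁.add ih₂).of_eq fun θ => by
      simp only [Pi.add_apply]
      ring
  | smul a hf₁ ih =>
    exact (Rep.smul a ih).of_eq fun θ => by
      simp only [Pi.smul_apply, smul_eq_mul]
      ring

lemma Rep.polyEval (S : Set ℂ) (P : Polynomial ℂ) :
    Rep S (fun θ => P.eval (uc θ)) := by
  induction P using Polynomial.induction_on with
  | C a =>
    exact (Rep.smul a (rep_one S)).of_eq fun θ => by
      simp
  | add p q ihp ihq =>
    exact (ihp.add ihq).of_eq fun θ => by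
      simp [Pi.add_apply]
  | monomial n a ih =>
    apply ih.mul_u.of_eq
    intro θ
    simp only [Polynomial.eval_mul, Polynomial.eval_pow, Polynomial.eval_C, Polynomial.eval_X,
      pow_succ]
    ring

lemma Rep.polyEvalInv (S : Set ℂ) (P : Polynomial ℂ) :
    Rep S (fun θ => P.eval ((uc θ)⁻¹)) := by
  induction P using Polynomial.induction_on with
  | C a =>
    exact (Rep.smul a (rep_one S)).of_eq fun θ => by
      simp
  | add p q ihp ihq =>
    exact (ihp.add ihq).of_eq fun θ => by
      simp [Pi.add_apply]
  | monomial n a ih =>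
    apply ih.mul_uinv.of_eq
    intro θ
    simp only [Polynomial.eval_mul, Polynomial.eval_pow, Polynomial.eval_C, Polynomial.eval_X,
      pow_succ]
    ring

lemma Rep.invMultiset (S : Set ℂ) (M : Multiset ℂ)
    (hM : ∀ a ∈ M, ‖a‖ ≠ 1 ∧ (‖a‖ < 1 → a ∈ S)) :
    Rep S (fun θ => ((M.map (fun a => uc θ - a)).prod)⁻¹) := by
  induction M using Multiset.induction_on with
  | empty => exact (rep_one S).of_eq fun θ => by simp
  | cons a M ih =>
    have ha := hM a (Multiset.mem_cons_self a M)
    have ihM := ih fun b hb => hM b (Multiset.mem_cons_of_mem hb)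
    apply ((ihM.div_lin ha.1 ha.2)).of_eq
    intro θ
    simp only [Multiset.map_cons, Multiset.prod_cons, mul_inv]
    ring

lemma Rep.invPoly {S : Set ℂ} (q : Polynomial ℂ) (hq : q ≠ 0)
    (hroots : ∀ a, q.eval a = 0 → ‖a‖ ≠ 1 ∧ (‖a‖ < 1 → a ∈ S)) :
    Rep S (fun θ => (q.eval (uc θ))⁻¹) := by
  have hsp : q.Splits := IsAlgClosed.splits q
  have hfact := hsp.eq_prod_roots
  have hM : ∀ a ∈ q.roots, ‖a‖ ≠ 1 ∧ (‖a‖ < 1 → a ∈ S) := by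
    intro a ha
    exact hroots a ((Polynomial.mem_roots hq).mp ha)
  apply (Rep.smul (q.leadingCoeff⁻¹) (Rep.invMultiset S q.roots hM)).of_eq
  intro θ
  simp only [Pi.smul_apply, smul_eq_mul]
  have : q.eval (uc θ) = q.leadingCoeff * ((q.roots.map fun a => uc θ - a)).prod := by
    conv_lhs => rw [hfact]
    rw [Polynomial.eval_mul, Polynomial.eval_C, Polynomial.eval_multiset_prod]
    congr 1
    rw [Multiset.map_map]
    congr 1
    apply Multiset.map_congr rfl
    intro a _
    simp
  rw [this, mul_inv]

lemma Rep.qr {S : Set ℂ} (hS : S ⊆ ball (0:ℂ) 1) {f : ℝ → ℂ} (h : Rep S f) :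
    QR S (Iint f) := by
  induction h with
  | basis m k c h1 h2 => exact QR_bf hS h1 h2 k m
  | add hf hg ihf ihg =>
    apply QR.congr (QR.add hS ihf ihg)
    intro z hz
    have := Iint_add hf.cont hg.cont hz
    rw [← this]
    rfl
  | @smul a f0 hf ihf =>
    apply QR.congr (QR.smul a ihf)
    intro z hz
    have := Iint_smul a f0 z
    rw [← this]
    rfl

lemma integral_congr_Ioo {f g : ℝ → ℂ}
    (h : ∀ θ ∈ Set.Ioo (0:ℝ) (2 * Real.pi), f θ = g θ) :
    ∫ θ in (0:ℝ)..(2 * Real.pi), f θ = ∫ θ in (0:ℝ)..(2 * Real.pi), g θ := by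
  apply intervalIntegral.integral_congr_ae
  have h2 : (0:ℝ) ≤ 2 * Real.pi := by positivity
  rw [Set.uIoc_of_le h2]
  have hae : ∀ᵐ θ : ℝ, θ ≠ 2 * Real.pi := by
    rw [MeasureTheory.ae_iff]
    simp only [ne_eq, not_not, Set.setOf_eq_eq_singleton]
    exact Real.volume_singleton
  filter_upwards [hae] with θ hθ hmem
  exact h θ ⟨hmem.1, lt_of_le_of_ne hmem.2 hθ⟩

lemma uc_inv_eq_conj (θ : ℝ) : (uc θ)⁻¹ = (starRingEnd ℂ) (uc θ) := by
  have h1 : (starRingEnd ℂ) (uc θ) = Complex.exp ((starRingEnd ℂ) ((θ:ℂ) * Complex.I)) := by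
    rw [Complex.exp_conj]
    rfl
  have h2 : (uc θ)⁻¹ = Complex.exp (-((θ:ℂ) * Complex.I)) := (Complex.exp_neg _).symm
  rw [h1, h2]
  congr 1
  simp [map_mul, Complex.conj_ofReal, Complex.conj_I]

lemma conj_polyEval (P : Polynomial ℂ) (θ : ℝ) :
    (starRingEnd ℂ) (P.eval (uc θ)) = (P.map (starRingEnd ℂ)).eval ((uc θ)⁻¹) := by
  rw [uc_inv_eq_conj, Polynomial.eval_map]
  exact (Polynomial.eval₂_hom _ _).symm

lemma abs_sq_eq (x : ℂ) : ((‖x‖ ^ 2 : ℝ) : ℂ) = x * (starRingEnd ℂ) x := by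
  rw [Complex.mul_conj]
  norm_cast
  exact Complex.sq_norm x

lemma rep_zpow (S : Set ℂ) (m : ℤ) : Rep S (fun θ => uc θ ^ m) := by
  apply (Rep.mul_zpow m (rep_one S)).of_eq
  intro θ
  simp

lemma exp_eq_uc_zpow (m : ℤ) (θ : ℝ) : Complex.exp ((m : ℂ) * ((θ:ℂ) * Complex.I)) = uc θ ^ m := by
  rw [Complex.exp_int_mul]
  rfl

end Stmt5

/-- **Proposition (meromorphic continuation of `G_n`, `D_n`, `J_n`).**
If `w′(θ) = f(e^{iθ})` with `f = p/q` a rational function (in lowest terms) without poles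
on the unit circle, then `G_n`, `D_n`, `J_n` extend to all of `ℂ` as rational functions
with no poles except possibly at `0` and at the poles of `f` in the open unit disk. -/
theorem stmt_5
    (n : ℕ) (hn : 1 ≤ n)
    (w : ℝ → ℝ)
    (hwper : Function.Periodic w (2 * Real.pi))
    (hwpos : ∀ θ, 0 ≤ w θ)
    (hwcont : Continuous w)
    (hwdiff : ∀ θ ∈ Set.Ioo (0:ℝ) (2 * Real.pi), DifferentiableAt ℝ w θ)
    (hwint : IntegrableOn (deriv w) (Set.Ioo (0:ℝ) (2 * Real.pi)))
    (hwprob : (2 * Real.pi)⁻¹ * (∫ θ in (0:ℝ)..(2 * Real.pi), w θ) = 1)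
    (hsupp : {θ ∈ Set.Ico (0:ℝ) (2 * Real.pi) | 0 < w θ}.Infinite)
    (φ : ℕ → Polynomial ℂ) (κ : ℕ → ℝ)
    (hκ : ∀ k ≤ n, 0 < κ k)
    (hdeg : ∀ k ≤ n, (φ k).natDegree = k)
    (hlead : ∀ k ≤ n, (φ k).leadingCoeff = (κ k : ℂ))
    (horth : ∀ j ≤ n, ∀ k ≤ n,
      (2 * Real.pi : ℂ)⁻¹ * ∫ θ in (0:ℝ)..(2 * Real.pi),
          (φ j).eval (Complex.exp (θ * Complex.I))
            * (starRingEnd ℂ) ((φ k).eval (Complex.exp (θ * Complex.I))) * (w θ : ℂ)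
        = if j = k then 1 else 0)
    (G D J : ℂ → ℂ)
    (hG : ∀ z : ℂ, 1 < ‖z‖ → G z =
      Complex.I * (2 * Real.pi : ℂ)⁻¹ * ∫ θ in (0:ℝ)..(2 * Real.pi),
        (((‖(revPoly (φ (n - 1))).eval (Complex.exp (θ * Complex.I))‖) ^ 2
            * deriv w θ : ℝ) : ℂ) / (z - Complex.exp (θ * Complex.I)))
    (hD : ∀ z : ℂ, 1 < ‖z‖ → D z =
      -Complex.I * z * (2 * Real.pi : ℂ)⁻¹ * ∫ θ in (0:ℝ)..(2 * Real.pi),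
        ((revPoly (φ (n - 1))).eval (Complex.exp (θ * Complex.I))) ^ 2
          * ((deriv w θ : ℝ) : ℂ) * Complex.exp (-(n : ℂ) * θ * Complex.I)
          / (z - Complex.exp (θ * Complex.I)))
    (hJ : ∀ z : ℂ, 1 < ‖z‖ → J z =
      Complex.I * (2 * Real.pi : ℂ)⁻¹ * ∫ θ in (0:ℝ)..(2 * Real.pi),
        ((φ (n - 1)).eval (Complex.exp (θ * Complex.I))) ^ 2
          * ((deriv w θ : ℝ) : ℂ) * Complex.exp (-((n : ℂ) - 2) * θ * Complex.I)
          / (z - Complex.exp (θ * Complex.I)))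
    -- `w′(θ) = f(e^{iθ})` with `f = p/q` rational, in lowest terms, no poles on `∂𝔻`
    (p q : Polynomial ℂ) (hq : q ≠ 0) (hpq : IsCoprime p q)
    (hqcirc : ∀ z : ℂ, ‖z‖ = 1 → q.eval z ≠ 0)
    (hwf : ∀ θ ∈ Set.Ioo (0:ℝ) (2 * Real.pi),
      ((deriv w θ : ℝ) : ℂ)
        = p.eval (Complex.exp (θ * Complex.I)) / q.eval (Complex.exp (θ * Complex.I))) :
    ∃ pG qG pD qD pJ qJ : Polynomial ℂ,
      qG ≠ 0 ∧ qD ≠ 0 ∧ qJ ≠ 0 ∧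
      (∀ z : ℂ, 1 < ‖z‖ → pG.eval z / qG.eval z = G z) ∧
      (∀ z : ℂ, 1 < ‖z‖ → pD.eval z / qD.eval z = D z) ∧
      (∀ z : ℂ, 1 < ‖z‖ → pJ.eval z / qJ.eval z = J z) ∧
      (∀ z : ℂ, qG.eval z = 0 → z = 0 ∨ (q.eval z = 0 ∧ ‖z‖ < 1)) ∧
      (∀ z : ℂ, qD.eval z = 0 → z = 0 ∨ (q.eval z = 0 ∧ ‖z‖ < 1)) ∧
      (∀ z : ℂ, qJ.eval z = 0 → z = 0 ∨ (q.eval z = 0 ∧ ‖z‖ < 1)) := by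

  classical
  have hSball : {z : ℂ | q.eval z = 0 ∧ ‖z‖ < 1} ⊆ Metric.ball (0:ℂ) 1 := by
    intro z hz
    rw [mem_ball_zero_iff]
    exact hz.2
  have hroots : ∀ a : ℂ, q.eval a = 0 →
      ‖a‖ ≠ 1 ∧ (‖a‖ < 1 → a ∈ {z : ℂ | q.eval z = 0 ∧ ‖z‖ < 1}) := by
    intro a ha
    exact ⟨fun h => hqcirc a h ha, fun h => ⟨ha, h⟩⟩
  have hrepq : Stmt5.Rep {z : ℂ | q.eval z = 0 ∧ ‖z‖ < 1}
      (fun θ => (q.eval (Stmt5.uc θ))⁻¹) := Stmt5.Rep.invPoly q hq hroots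
  -- ### G ###
  have hrepG : Stmt5.Rep {z : ℂ | q.eval z = 0 ∧ ‖z‖ < 1}
      (fun θ => (revPoly (φ (n-1))).eval (Stmt5.uc θ)
        * ((revPoly (φ (n-1))).map (starRingEnd ℂ)).eval ((Stmt5.uc θ)⁻¹)
        * p.eval (Stmt5.uc θ) * (q.eval (Stmt5.uc θ))⁻¹) := by
    have h := (((Stmt5.Rep.polyEval {z : ℂ | q.eval z = 0 ∧ ‖z‖ < 1} (revPoly (φ (n-1)))).mul
      (Stmt5.Rep.polyEvalInv {z : ℂ | q.eval z = 0 ∧ ‖z‖ < 1} ((revPoly (φ (n-1))).map (starRingEnd ℂ)))).mul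
      (Stmt5.Rep.polyEval {z : ℂ | q.eval z = 0 ∧ ‖z‖ < 1} p)).mul hrepq
    exact h.of_eq fun θ => rfl
  obtain ⟨AG, BG, hBG0, hBGpol, hABG⟩ := Stmt5.Rep.qr hSball hrepG
  have hGint : ∀ z : ℂ, 1 < ‖z‖ →
      (∫ θ in (0:ℝ)..(2 * Real.pi),
        (((‖(revPoly (φ (n - 1))).eval (Complex.exp (θ * Complex.I))‖) ^ 2
            * deriv w θ : ℝ) : ℂ) / (z - Complex.exp (θ * Complex.I)))
      = Stmt5.Iint (fun θ => (revPoly (φ (n-1))).eval (Stmt5.uc θ)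
          * ((revPoly (φ (n-1))).map (starRingEnd ℂ)).eval ((Stmt5.uc θ)⁻¹)
          * p.eval (Stmt5.uc θ) * (q.eval (Stmt5.uc θ))⁻¹) z := by
    intro z hz
    apply Stmt5.integral_congr_Ioo
    intro θ hθ
    have hwf' : ((deriv w θ : ℝ) : ℂ) = p.eval (Stmt5.uc θ) / q.eval (Stmt5.uc θ) := hwf θ hθ
    show (((‖(revPoly (φ (n - 1))).eval (Stmt5.uc θ)‖) ^ 2
            * deriv w θ : ℝ) : ℂ) / (z - Stmt5.uc θ)
      = (revPoly (φ (n-1))).eval (Stmt5.uc θ)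
          * ((revPoly (φ (n-1))).map (starRingEnd ℂ)).eval ((Stmt5.uc θ)⁻¹)
          * p.eval (Stmt5.uc θ) * (q.eval (Stmt5.uc θ))⁻¹ / (z - Stmt5.uc θ)
    rw [Complex.ofReal_mul, Stmt5.abs_sq_eq, hwf', Stmt5.conj_polyEval, div_eq_mul_inv]
    ring
  -- ### D ###
  have hrepD : Stmt5.Rep {z : ℂ | q.eval z = 0 ∧ ‖z‖ < 1}
      (fun θ => ((revPoly (φ (n-1))).eval (Stmt5.uc θ)) ^ 2
        * p.eval (Stmt5.uc θ) * (q.eval (Stmt5.uc θ))⁻¹ * Stmt5.uc θ ^ (-(n:ℤ))) := by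
    have hsq := ((Stmt5.Rep.polyEval {z : ℂ | q.eval z = 0 ∧ ‖z‖ < 1} (revPoly (φ (n-1)))).mul
      (Stmt5.Rep.polyEval {z : ℂ | q.eval z = 0 ∧ ‖z‖ < 1} (revPoly (φ (n-1))))).of_eq
      (fun θ => (pow_two ((revPoly (φ (n-1))).eval (Stmt5.uc θ))).symm)
    have h := ((hsq.mul (Stmt5.Rep.polyEval {z : ℂ | q.eval z = 0 ∧ ‖z‖ < 1} p)).mul hrepq).mul
      (Stmt5.rep_zpow {z : ℂ | q.eval z = 0 ∧ ‖z‖ < 1} (-(n:ℤ)))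
    exact h.of_eq fun θ => rfl
  obtain ⟨AD, BD, hBD0, hBDpol, hABD⟩ := Stmt5.Rep.qr hSball hrepD
  have hexpD : ∀ θ : ℝ, Complex.exp (-(n : ℂ) * θ * Complex.I) = Stmt5.uc θ ^ (-(n:ℤ)) := by
    intro θ
    rw [show (-(n : ℂ) * θ * Complex.I) = ((-(n:ℤ) : ℤ) : ℂ) * ((θ:ℂ) * Complex.I) by
      push_cast; ring]
    exact Stmt5.exp_eq_uc_zpow _ θ
  have hDint : ∀ z : ℂ, 1 < ‖z‖ →
      (∫ θ in (0:ℝ)..(2 * Real.pi),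
        ((revPoly (φ (n - 1))).eval (Complex.exp (θ * Complex.I))) ^ 2
          * ((deriv w θ : ℝ) : ℂ) * Complex.exp (-(n : ℂ) * θ * Complex.I)
          / (z - Complex.exp (θ * Complex.I)))
      = Stmt5.Iint (fun θ => ((revPoly (φ (n-1))).eval (Stmt5.uc θ)) ^ 2
          * p.eval (Stmt5.uc θ) * (q.eval (Stmt5.uc θ))⁻¹ * Stmt5.uc θ ^ (-(n:ℤ))) z := by
    intro z hz
    apply Stmt5.integral_congr_Ioo
    intro θ hθ
    have hwf' : ((deriv w θ : ℝ) : ℂ) = p.eval (Stmt5.uc θ) / q.eval (Stmt5.uc θ) := hwf θ hθ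
    show ((revPoly (φ (n - 1))).eval (Stmt5.uc θ)) ^ 2
          * ((deriv w θ : ℝ) : ℂ) * Complex.exp (-(n : ℂ) * θ * Complex.I) / (z - Stmt5.uc θ)
      = ((revPoly (φ (n-1))).eval (Stmt5.uc θ)) ^ 2
          * p.eval (Stmt5.uc θ) * (q.eval (Stmt5.uc θ))⁻¹ * Stmt5.uc θ ^ (-(n:ℤ))
          / (z - Stmt5.uc θ)
    rw [hwf', hexpD θ, div_eq_mul_inv]
    ring
  -- ### J ###
  have hrepJ : Stmt5.Rep {z : ℂ | q.eval z = 0 ∧ ‖z‖ < 1}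
      (fun θ => ((φ (n-1)).eval (Stmt5.uc θ)) ^ 2
        * p.eval (Stmt5.uc θ) * (q.eval (Stmt5.uc θ))⁻¹ * Stmt5.uc θ ^ ((2:ℤ) - n)) := by
    have hsq := ((Stmt5.Rep.polyEval {z : ℂ | q.eval z = 0 ∧ ‖z‖ < 1} (φ (n-1))).mul
      (Stmt5.Rep.polyEval {z : ℂ | q.eval z = 0 ∧ ‖z‖ < 1} (φ (n-1)))).of_eq
      (fun θ => (pow_two ((φ (n-1)).eval (Stmt5.uc θ))).symm)
    have h := ((hsq.mul (Stmt5.Rep.polyEval {z : ℂ | q.eval z = 0 ∧ ‖z‖ < 1} p)).mul hrepq).mul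
      (Stmt5.rep_zpow {z : ℂ | q.eval z = 0 ∧ ‖z‖ < 1} ((2:ℤ) - n))
    exact h.of_eq fun θ => rfl
  obtain ⟨AJ, BJ, hBJ0, hBJpol, hABJ⟩ := Stmt5.Rep.qr hSball hrepJ
  have hexpJ : ∀ θ : ℝ, Complex.exp (-((n : ℂ) - 2) * θ * Complex.I)
      = Stmt5.uc θ ^ ((2:ℤ) - n) := by
    intro θ
    rw [show (-((n : ℂ) - 2) * θ * Complex.I) = (((2:ℤ) - n : ℤ) : ℂ) * ((θ:ℂ) * Complex.I) by
      push_cast; ring]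
    exact Stmt5.exp_eq_uc_zpow _ θ
  have hJint : ∀ z : ℂ, 1 < ‖z‖ →
      (∫ θ in (0:ℝ)..(2 * Real.pi),
        ((φ (n - 1)).eval (Complex.exp (θ * Complex.I))) ^ 2
          * ((deriv w θ : ℝ) : ℂ) * Complex.exp (-((n : ℂ) - 2) * θ * Complex.I)
          / (z - Complex.exp (θ * Complex.I)))
      = Stmt5.Iint (fun θ => ((φ (n-1)).eval (Stmt5.uc θ)) ^ 2
          * p.eval (Stmt5.uc θ) * (q.eval (Stmt5.uc θ))⁻¹ * Stmt5.uc θ ^ ((2:ℤ) - n)) z := by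
    intro z hz
    apply Stmt5.integral_congr_Ioo
    intro θ hθ
    have hwf' : ((deriv w θ : ℝ) : ℂ) = p.eval (Stmt5.uc θ) / q.eval (Stmt5.uc θ) := hwf θ hθ
    show ((φ (n - 1)).eval (Stmt5.uc θ)) ^ 2
          * ((deriv w θ : ℝ) : ℂ) * Complex.exp (-((n : ℂ) - 2) * θ * Complex.I)
          / (z - Stmt5.uc θ)
      = ((φ (n-1)).eval (Stmt5.uc θ)) ^ 2
          * p.eval (Stmt5.uc θ) * (q.eval (Stmt5.uc θ))⁻¹ * Stmt5.uc θ ^ ((2:ℤ) - n)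
          / (z - Stmt5.uc θ)
    rw [hwf', hexpJ θ, div_eq_mul_inv]
    ring
  -- ### assemble ###
  refine ⟨Polynomial.C (Complex.I * (2 * Real.pi : ℂ)⁻¹) * AG, BG,
    Polynomial.C (-Complex.I * (2 * Real.pi : ℂ)⁻¹) * Polynomial.X * AD, BD,
    Polynomial.C (Complex.I * (2 * Real.pi : ℂ)⁻¹) * AJ, BJ,
    hBG0, hBD0, hBJ0, ?_, ?_, ?_, hBGpol, hBDpol, hBJpol⟩
  · intro z hz
    rw [hG z hz, hGint z hz, hABG z hz]
    simp only [Polynomial.eval_mul, Polynomial.eval_C]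
    ring
  · intro z hz
    rw [hD z hz, hDint z hz, hABD z hz]
    simp only [Polynomial.eval_mul, Polynomial.eval_C, Polynomial.eval_X]
    ring
  · intro z hz
    rw [hJ z hz, hJint z hz, hABJ z hz]
    simp only [Polynomial.eval_mul, Polynomial.eval_C]
    ring
end

section
/- For every integer n ≥ 2 and every collection x₁, …, x_n of n distinct points on the unit circle {z ∈ ℂ : |z| = 1}, there exist an integer m ≥ 1, points a₁, …, a_m ∈ ℂ \ {x₁,…,x_n}, and real numbers q₁, …, q_m such that for every j ∈ {1,…,n}: Σ_{k≠j} 1/(x_j − x_k) + Σ_{i=1}^{m} q_i/(x_j − a_i) = 0. -/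
open Complex Polynomial

lemma aux_sum_inv (z : ℂ) (R : Multiset ℂ) (hR : ∀ r ∈ R, z ≠ r) :
    (R.map (fun r => 1 / (z - r))).sum
        * Polynomial.eval z (R.map (fun a => Polynomial.X - Polynomial.C a)).prod
      = Polynomial.eval z
          (Polynomial.derivative (R.map (fun a => Polynomial.X - Polynomial.C a)).prod) := by
  induction R using Multiset.induction with
  | empty => simp
  | cons r R ih =>
    have hz : z - r ≠ 0 := sub_ne_zero.2 (hR r (Multiset.mem_cons_self _ _))
    have ih' := ih (fun s hs => hR s (Multiset.mem_cons_of_mem hs))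
    simp only [Multiset.map_cons, Multiset.sum_cons, Multiset.prod_cons, derivative_mul,
      derivative_sub, derivative_X, derivative_C, sub_zero, eval_add, eval_mul, eval_sub,
      eval_X, eval_C, eval_one, one_mul]
    have hinv : 1 / (z - r) * (z - r) = 1 := by field_simp
    set p := Polynomial.eval z (R.map (fun a => Polynomial.X - Polynomial.C a)).prod
    set d := Polynomial.eval z
      (Polynomial.derivative (R.map (fun a => Polynomial.X - Polynomial.C a)).prod)
    linear_combination (z - r) * ih' + p * hinv

/-- For every collection of `n ≥ 2` distinct points on the unit circle there exists a set
of electric field generators (points `aᵢ` with real charges `qᵢ`) putting the collection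
in total electrostatic equilibrium. -/
theorem stmt_9 (n : ℕ) (hn : 2 ≤ n) (x : Fin n → ℂ)
    (hx : ∀ j, ‖x j‖ = 1) (hinj : Function.Injective x) :
    ∃ (m : ℕ) (a : Fin m → ℂ) (q : Fin m → ℝ),
      1 ≤ m ∧ (∀ i, a i ∉ Set.range x) ∧
      ∀ j : Fin n,
        (∑ k ∈ Finset.univ.erase j, 1 / (x j - x k))
          + ∑ i, (q i : ℂ) / (x j - a i) = 0 := by
  classical
  set P : ℂ[X] := ∏ k, (X - C (x k)) with hP
  set Q : ℂ[X] := derivative P with hQ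
  -- local polynomials
  set L : Fin n → ℂ[X] := fun j => ∏ k ∈ Finset.univ.erase j, (X - C (x k)) with hL
  have hPL : ∀ j, P = (X - C (x j)) * L j := by
    intro j
    rw [hP, hL]
    exact (Finset.mul_prod_erase Finset.univ (fun k => X - C (x k)) (Finset.mem_univ j)).symm
  have hLne : ∀ j, (L j).eval (x j) ≠ 0 := by
    intro j
    rw [hL]
    simp only [eval_prod, eval_sub, eval_X, eval_C]
    refine Finset.prod_ne_zero_iff.2 fun k hk => sub_ne_zero.2 ?_
    exact fun h => (Finset.mem_erase.1 hk).1 (hinj h).symm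
  have hQeval : ∀ j, Q.eval (x j) = (L j).eval (x j) := by
    intro j
    rw [hQ, hPL j, derivative_mul, derivative_sub, derivative_X, derivative_C, sub_zero,
      one_mul, eval_add, eval_mul, eval_sub, eval_X, eval_C, sub_self, zero_mul, add_zero]
  have hQne : ∀ j, Q.eval (x j) ≠ 0 := fun j => (hQeval j) ▸ hLne j
  have hQ0 : Q ≠ 0 := fun h => hQne ⟨0, by omega⟩ (by rw [h]; simp)
  -- degree of P and Q
  have hPmonic : P.Monic := monic_prod_of_monic _ _ fun k _ => monic_X_sub_C _
  have hPdeg : P.natDegree = n := by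
    rw [hP, natDegree_prod _ _ (fun k _ => X_sub_C_ne_zero _)]
    simp [natDegree_X_sub_C]
  have hQdeg : Q.natDegree = n - 1 := by
    have h0 : 0 < P.natDegree := by rw [hPdeg]; omega
    have := degree_derivative_eq P h0
    rw [hQ]
    rw [natDegree, this, hPdeg]
    rfl
  have hcard : Q.roots.card = n - 1 := by
    rw [← hQdeg]
    exact (splits_iff_card_roots.1 (IsAlgClosed.splits Q))
  -- enumerate roots
  set l : List ℂ := Q.roots.toList with hl
  have hlen : l.length = n - 1 := by rw [hl, Multiset.length_toList, hcard]
  refine ⟨l.length, fun i => l.get i, fun _ => -(1/2 : ℝ), ?_, ?_, ?_⟩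
  · rw [hlen]; omega
  · rintro i ⟨j, hji⟩
    have hmem : l.get i ∈ Q.roots := by
      rw [← Multiset.mem_toList]; exact List.get_mem l i
    have hroot := (mem_roots hQ0).1 hmem
    exact hQne j (by rw [hji]; exact hroot)
  · intro j
    -- first sum via aux
    set T : Multiset ℂ := (Finset.univ.erase j).val.map x with hT
    have hTz : ∀ r ∈ T, x j ≠ r := by
      intro r hr
      rw [hT, Multiset.mem_map] at hr
      obtain ⟨k, hk, rfl⟩ := hr
      exact fun h => (Finset.mem_erase.1 (show k ∈ Finset.univ.erase j from hk)).1 (hinj h).symm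
    have hLprod : L j = (T.map (fun a => X - C a)).prod := by
      show ∏ k ∈ Finset.univ.erase j, (X - C (x k)) = _
      rw [Finset.prod_eq_multiset_prod, hT, Multiset.map_map]
      rfl
    have hsum1 : (∑ k ∈ Finset.univ.erase j, 1 / (x j - x k))
        = (T.map (fun r => 1 / (x j - r))).sum := by
      rw [Finset.sum_eq_multiset_sum, hT, Multiset.map_map]
      rfl
    have key1 : (∑ k ∈ Finset.univ.erase j, 1 / (x j - x k)) * (L j).eval (x j)
        = (derivative (L j)).eval (x j) := by
      rw [hsum1, hLprod]
      exact aux_sum_inv _ _ hTz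
    -- second derivative at x j
    have hQ'eval : (derivative Q).eval (x j) = 2 * (derivative (L j)).eval (x j) := by
      rw [hQ, hPL j]
      simp only [derivative_mul, derivative_sub, derivative_X, derivative_C, sub_zero, one_mul,
        derivative_add, eval_add, eval_mul, eval_sub, eval_X, eval_C, sub_self, zero_mul,
        add_zero]
      ring
    -- roots sum
    have hQRz : ∀ r ∈ Q.roots, x j ≠ r := by
      intro r hr h
      exact hQne j (h ▸ ((mem_roots hQ0).1 hr))
    have hQprod : C Q.leadingCoeff * (Q.roots.map (fun a => X - C a)).prod = Q :=
      C_leadingCoeff_mul_prod_multiset_X_sub_C (hcard.trans hQdeg.symm)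
    have hlc : Q.leadingCoeff ≠ 0 := leadingCoeff_ne_zero.2 hQ0
    have key2 : (Q.roots.map (fun r => 1 / (x j - r))).sum * Q.eval (x j)
        = (derivative Q).eval (x j) := by
      have h1 := aux_sum_inv (x j) Q.roots hQRz
      have e1 : Q.eval (x j)
          = Q.leadingCoeff * Polynomial.eval (x j) (Q.roots.map (fun a => X - C a)).prod := by
        conv_lhs => rw [← hQprod]
        rw [eval_mul, eval_C]
      have e2 : (derivative Q).eval (x j)
          = Q.leadingCoeff
              * Polynomial.eval (x j) (derivative (Q.roots.map (fun a => X - C a)).prod) := by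
        conv_lhs => rw [← hQprod]
        rw [derivative_mul, derivative_C, zero_mul, zero_add, eval_mul, eval_C]
      rw [e1, e2]
      linear_combination Q.leadingCoeff * h1
    -- charge sum equals -(1/2) * roots sum
    -- charge sum equals -(1/2) * roots sum
    have hlist : (Q.roots.map (fun r => 1 / (x j - r))).sum
        = ∑ i : Fin l.length, 1 / (x j - l.get i) := by
      conv_lhs => rw [← Q.roots.coe_toList, ← hl]
      rw [Multiset.map_coe, Multiset.sum_coe]
      conv_lhs => rw [show l = List.ofFn l.get from (List.ofFn_get l).symm]
      rw [List.map_ofFn, List.sum_ofFn]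
      rfl
    have hcharge : (∑ i : Fin l.length, ((-(1/2 : ℝ) : ℝ) : ℂ) / (x j - l.get i))
        = -(1/2 : ℂ) * (Q.roots.map (fun r => 1 / (x j - r))).sum := by
      rw [hlist, Finset.mul_sum]
      refine Finset.sum_congr rfl fun i _ => ?_
      push_cast
      ring
    -- combine
    set S : ℂ := ∑ k ∈ Finset.univ.erase j, 1 / (x j - x k) with hS
    set RS : ℂ := (Q.roots.map (fun r => 1 / (x j - r))).sum with hRS
    have hRS2 : RS = 2 * S := by
      have h2 : RS * (L j).eval (x j) = (2 * S) * (L j).eval (x j) := by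
        rw [← hQeval j]
        rw [key2, hQ'eval, ← key1, hQeval j]
        ring
      exact mul_right_cancel₀ (hLne j) h2
    calc S + ∑ i : Fin l.length, ((-(1/2 : ℝ) : ℝ) : ℂ) / (x j - l.get i)
        = S + -(1/2 : ℂ) * RS := by rw [hcharge]
      _ = 0 := by rw [hRS2]; ring
end

section
/- Let w₁, …, w_m ∈ ℂ be distinct, let t₁, …, t_m ∈ ℂ, and let S be a polynomial which is either zero or has degree at most m−2. Suppose P is a polynomial of degree N ≥ 1 whose zeros p₁, …, p_N are distinct, that P(w_i) ≠ 0 for every i ∈ {1,…,m}, and that P″(z) + (Σ_{i=1}^{m} t_i/(z − w_i))·P′(z) + (S(z)/∏_{j=1}^{m}(z − w_j))·P(z) = 0 for all z ∈ ℂ \ {w₁,…,w_m}. Then for every j ∈ {1,…,N}: Σ_{k≠j} 1/(p_j − p_k) + Σ_{i=1}^{m} (t_i/2)/(p_j − w_i) = 0. -/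
open Complex Polynomial

private lemma derivative_finset_prod {ι : Type*} [DecidableEq ι] (s : Finset ι)
    (f : ι → Polynomial ℂ) :
    derivative (∏ i ∈ s, f i) = ∑ i ∈ s, (∏ j ∈ s.erase i, f j) * derivative (f i) := by
  induction s using Finset.induction_on with
  | empty => simp
  | @insert a s ha ih =>
    rw [Finset.prod_insert ha, derivative_mul, ih, Finset.sum_insert ha,
      Finset.erase_insert ha, Finset.mul_sum, mul_comm (derivative (f a))]
    congr 1
    refine Finset.sum_congr rfl fun i hi => ?_
    have hia : a ≠ i := fun h => ha (h ▸ hi)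
    rw [Finset.erase_insert_of_ne hia,
      Finset.prod_insert (fun h => ha (Finset.mem_of_mem_erase h))]
    ring

/-- If a polynomial `P` of degree `N ≥ 1` with distinct zeros `p₁,…,p_N`, none of which is
one of the distinct points `w₁,…,w_m`, solves the generalized Lamé equation
`P″ + (Σ tᵢ/(z−wᵢ))·P′ + (S/∏(z−wⱼ))·P = 0` (with `S` zero or of degree at most `m−2`)
away from the `wᵢ`, then its zeros are in total electrostatic equilibrium with respect to
charges `tᵢ/2` at the points `wᵢ`. -/
theorem stmt_10 (m : ℕ) (w : Fin m → ℂ) (hw : Function.Injective w)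
    (t : Fin m → ℂ) (S : Polynomial ℂ)
    (hS : S = 0 ∨ (S.natDegree : ℤ) ≤ (m : ℤ) - 2)
    (N : ℕ) (hN : 1 ≤ N) (c : ℂ) (hc : c ≠ 0)
    (p : Fin N → ℂ) (hp : Function.Injective p)
    (P : Polynomial ℂ) (hP : P = C c * ∏ k, (X - C (p k)))
    (hPw : ∀ i, P.eval (w i) ≠ 0)
    (hode : ∀ z : ℂ, z ∉ Set.range w →
      (derivative (derivative P)).eval z
        + (∑ i, t i / (z - w i)) * (derivative P).eval z
        + (S.eval z / ∏ j, (z - w j)) * P.eval z = 0) :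
    ∀ j : Fin N,
      (∑ k ∈ Finset.univ.erase j, 1 / (p j - p k))
        + ∑ i, (t i / 2) / (p j - w i) = 0 := by
  intro j
  classical
  set z := p j with hz
  set s : Finset (Fin N) := Finset.univ.erase j with hs
  have hPz : P.eval z = 0 := by
    rw [hP]
    simp only [eval_mul, eval_C, eval_prod, eval_sub, eval_X]
    rw [Finset.prod_eq_zero (Finset.mem_univ j) (by simp [hz])]
    ring
  have hzw : z ∉ Set.range w := by
    rintro ⟨i, hi⟩
    exact hPw i (by rw [hi, hPz])
  have hode' := hode z hzw
  rw [hPz, mul_zero, add_zero] at hode'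
  -- first derivative
  have hd1 : derivative P = C c * ∑ k : Fin N, ∏ l ∈ Finset.univ.erase k, (X - C (p l)) := by
    rw [hP, derivative_C_mul, derivative_finset_prod]
    congr 1
    refine Finset.sum_congr rfl fun k _ => ?_
    simp
  have hd1z : (derivative P).eval z = c * ∏ k ∈ s, (z - p k) := by
    rw [hd1]
    simp only [eval_mul, eval_C, eval_finset_sum, eval_prod, eval_sub, eval_X]
    congr 1
    rw [Finset.sum_eq_single j (fun k _ hk =>
      Finset.prod_eq_zero (Finset.mem_erase.mpr ⟨Ne.symm hk, Finset.mem_univ j⟩)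
        (by simp [hz])) (by simp)]
  -- second derivative
  set T : ℂ := ∑ k ∈ s, ∏ l ∈ s.erase k, (z - p l) with hT
  have hd2 : derivative (derivative P)
      = C c * ∑ k : Fin N, ∑ l ∈ Finset.univ.erase k,
          ∏ a ∈ (Finset.univ.erase k).erase l, (X - C (p a)) := by
    rw [hd1, derivative_C_mul, map_sum]
    congr 1
    refine Finset.sum_congr rfl fun k _ => ?_
    rw [derivative_finset_prod]
    refine Finset.sum_congr rfl fun l _ => ?_
    simp
  have hd2z : (derivative (derivative P)).eval z = c * (2 * T) := by
    rw [hd2]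
    simp only [eval_mul, eval_C, eval_finset_sum, eval_prod, eval_sub, eval_X]
    congr 1
    rw [← Finset.add_sum_erase _ _ (Finset.mem_univ j)]
    have h1 : ∑ l ∈ Finset.univ.erase j, ∏ a ∈ (Finset.univ.erase j).erase l, (z - p a) = T := rfl
    have h2 : ∑ k ∈ Finset.univ.erase j, ∑ l ∈ Finset.univ.erase k,
        ∏ a ∈ (Finset.univ.erase k).erase l, (z - p a) = T := by
      rw [hT]
      refine Finset.sum_congr rfl fun k hk => ?_
      have hkj : k ≠ j := (Finset.mem_erase.mp hk).1
      rw [Finset.sum_eq_single j]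
      · rw [Finset.erase_right_comm]
      · intro l hl hlj
        refine Finset.prod_eq_zero (Finset.mem_erase.mpr ⟨Ne.symm hlj,
          Finset.mem_erase.mpr ⟨Ne.symm hkj, Finset.mem_univ j⟩⟩) (by simp [hz])
      · intro h
        exact absurd (Finset.mem_erase.mpr ⟨Ne.symm hkj, Finset.mem_univ j⟩) h
    rw [h1, h2]
    ring
  rw [hd1z, hd2z] at hode'
  -- nonvanishing of the product
  have hpk : ∀ k ∈ s, z - p k ≠ 0 := by
    intro k hk
    have : k ≠ j := (Finset.mem_erase.mp hk).1
    exact sub_ne_zero.mpr fun h => this (hp (h.symm ▸ rfl)).symm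
  have hQ : ∏ k ∈ s, (z - p k) ≠ 0 := Finset.prod_ne_zero_iff.mpr hpk
  set A : ℂ := ∑ i, t i / (z - w i) with hA
  set Q : ℂ := ∏ k ∈ s, (z - p k) with hQdef
  -- rewrite goal sums
  have hsum1 : ∑ k ∈ s, 1 / (z - p k) = T / Q := by
    rw [hT, Finset.sum_div]
    refine Finset.sum_congr rfl fun k hk => ?_
    have hQsplit : (∏ l ∈ s.erase k, (z - p l)) * (z - p k) = Q := Finset.prod_erase_mul _ _ hk
    have hk0 := hpk k hk
    rw [eq_div_iff hQ, ← hQsplit]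
    field_simp
  have hsum2 : ∑ i, (t i / 2) / (z - w i) = A / 2 := by
    rw [hA, Finset.sum_div]
    refine Finset.sum_congr rfl fun i _ => ?_
    ring
  rw [hsum1, hsum2]
  have key : c * (2 * T) + A * (c * Q) = 0 := hode'
  have key2 : 2 * T + A * Q = 0 := by
    have : c * (2 * T + A * Q) = 0 := by linear_combination key
    exact (mul_eq_zero.mp this).resolve_left hc
  field_simp
  linear_combination key2
end

section
/- For every integer n ≥ 2 and every z ∈ ℂ with |z| < 1: (i) (i/(2π))∫₀^{2π} |φ_{n−1}*(e^{iθ})|²·w′(θ)/(z − e^{iθ}) dθ = 1/(2 − z); (ii) (−iz/(2π))∫₀^{2π} φ_{n−1}*(e^{iθ})²·w′(θ)·e^{−inθ}/(z − e^{iθ}) dθ = 0; (iii) (i/(2π))∫₀^{2π} φ_{n−1}(e^{iθ})²·w′(θ)·e^{−i(n−2)θ}/(z − e^{iθ}) dθ = 2z^{n−2}(z² − 1)/(z − 2)². -/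
open Complex Metric

lemma cauchy_circle (f : ℂ → ℂ) (hf : ∀ x ∈ closedBall (0:ℂ) 1, DifferentiableAt ℂ f x)
    {w : ℂ} (hw : ‖w‖ < 1) :
    (∫ θ in (0:ℝ)..(2*Real.pi),
      Complex.exp (θ*Complex.I) * Complex.I *
        ((Complex.exp (θ*Complex.I) - w)⁻¹ * f (Complex.exp (θ*Complex.I))))
      = 2 * Real.pi * Complex.I * f w := by
  have hw' : w ∈ ball (0:ℂ) 1 := by
    rw [mem_ball_zero_iff]; exact hw
  have h := Complex.circleIntegral_sub_inv_smul_of_differentiable_on_off_countable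
    (s := ∅) Set.countable_empty hw'
    (fun x hx => (hf x hx).continuousAt.continuousWithinAt)
    (fun x hx => hf x (ball_subset_closedBall hx.1))
  rw [circleIntegral] at h
  simp only [smul_eq_mul, deriv_circleMap, circleMap, ofReal_one, one_mul, zero_add] at h
  exact h

lemma two_sub_ne (x : ℂ) (hx : ‖x‖ ≤ 1) : (2:ℂ) - x ≠ 0 := by
  intro h
  rw [sub_eq_zero] at h
  rw [← h] at hx
  norm_num at hx

lemma mul_sub_one_ne {z : ℂ} (hz : ‖z‖ < 1) (x : ℂ) (hx : ‖x‖ ≤ 1) :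
    z * x - 1 ≠ 0 := by
  intro h
  rw [sub_eq_zero] at h
  have h' := congrArg (‖·‖) h
  simp only [norm_mul, norm_one] at h'
  nlinarith [norm_nonneg z, norm_nonneg x]

lemma abs_sq_eq (φ : ℝ) :
    (‖(2 - Complex.exp (φ * Complex.I)) / (Real.sqrt 3 : ℂ)‖)^2
      = (5 - 4*Real.cos φ)/3 := by
  rw [norm_div, div_pow, Complex.sq_norm, Complex.norm_real, Real.norm_eq_abs,
    _root_.abs_of_nonneg (Real.sqrt_nonneg 3), Real.sq_sqrt (by norm_num : (0:ℝ) ≤ 3),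
    Complex.normSq_apply]
  simp only [Complex.sub_re, Complex.sub_im, Complex.exp_ofReal_mul_I_re,
    Complex.exp_ofReal_mul_I_im]
  have h := Real.sin_sq_add_cos_sq φ
  norm_num
  nlinarith [h]

lemma sin_eq_u (θ : ℝ) : Complex.sin θ =
    (1 - Complex.exp ((θ:ℂ)*Complex.I)^2) * Complex.I / (2*Complex.exp ((θ:ℂ)*Complex.I)) := by
  have hu : Complex.exp ((θ:ℂ)*Complex.I) ≠ 0 := Complex.exp_ne_zero _
  simp only [Complex.sin, neg_mul, Complex.exp_neg]
  field_simp

lemma cos_eq_u (θ : ℝ) : Complex.cos θ =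
    (Complex.exp ((θ:ℂ)*Complex.I)^2 + 1) / (2*Complex.exp ((θ:ℂ)*Complex.I)) := by
  have hu : Complex.exp ((θ:ℂ)*Complex.I) ≠ 0 := Complex.exp_ne_zero _
  simp only [Complex.cos, neg_mul, Complex.exp_neg]
  field_simp

set_option maxHeartbeats 2000000 in
/-- Explicit evaluation of the integrals `G_n(z)`, `D_n(z)`, `J_n(z)` for `|z| < 1` for the
degree one Bernstein–Szegő weight `w(θ) = 3/(5 − 4cos θ)` (parameter `ζ = 1/2`), with
`w′(θ) = −12 sin θ/(5 − 4cos θ)²`, `φ_{n−1}(ζ) = (2ζ^{n−1} − ζ^{n−2})/√3` and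
`φ_{n−1}*(ζ) = (2 − ζ)/√3`. -/
theorem stmt_15 (n : ℕ) (hn : 2 ≤ n) (z : ℂ) (hz : ‖z‖ < 1) :
    (Complex.I * (2 * Real.pi : ℂ)⁻¹ * ∫ θ in (0:ℝ)..(2 * Real.pi),
        (((‖(2 - Complex.exp (θ * Complex.I)) / (Real.sqrt 3 : ℂ)‖) ^ 2
            * (-12 * Real.sin θ / (5 - 4 * Real.cos θ) ^ 2) : ℝ) : ℂ)
          / (z - Complex.exp (θ * Complex.I))
      = 1 / (2 - z)) ∧
    (-Complex.I * z * (2 * Real.pi : ℂ)⁻¹ * ∫ θ in (0:ℝ)..(2 * Real.pi),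
        ((2 - Complex.exp (θ * Complex.I)) / (Real.sqrt 3 : ℂ)) ^ 2
          * ((-12 * Real.sin θ / (5 - 4 * Real.cos θ) ^ 2 : ℝ) : ℂ)
          * Complex.exp (-(n : ℂ) * θ * Complex.I) / (z - Complex.exp (θ * Complex.I))
      = 0) ∧
    (Complex.I * (2 * Real.pi : ℂ)⁻¹ * ∫ θ in (0:ℝ)..(2 * Real.pi),
        ((2 * Complex.exp (θ * Complex.I) ^ (n - 1) - Complex.exp (θ * Complex.I) ^ (n - 2))
            / (Real.sqrt 3 : ℂ)) ^ 2
          * ((-12 * Real.sin θ / (5 - 4 * Real.cos θ) ^ 2 : ℝ) : ℂ)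
          * Complex.exp (-((n : ℂ) - 2) * θ * Complex.I) / (z - Complex.exp (θ * Complex.I))
      = 2 * z ^ (n - 2) * (z ^ 2 - 1) / (z - 2) ^ 2) := by
  obtain ⟨m, rfl⟩ : ∃ m, n = m + 2 := ⟨n - 2, by omega⟩
  have hπ : ((Real.pi:ℝ):ℂ) ≠ 0 := by exact_mod_cast Real.pi_ne_zero
  have h2z : (2:ℂ) - z ≠ 0 := two_sub_ne z hz.le
  have h2z' : z - 2 ≠ 0 := by
    intro h; apply h2z; linear_combination -h
  have hs3 : ((Real.sqrt 3 : ℝ) : ℂ) ≠ 0 := by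
    simp only [ne_eq, Complex.ofReal_eq_zero]
    positivity
  have h3 : ((Real.sqrt 3 : ℝ) : ℂ)^2 = 3 := by
    rw [← Complex.ofReal_pow, Real.sq_sqrt (by norm_num : (0:ℝ) ≤ 3)]
    norm_num
  have hIfin : ∀ c : ℂ, Complex.I * (2*(Real.pi:ℂ))⁻¹ * (2 * Real.pi * Complex.I * c) = -c := by
    intro c
    field_simp
    linear_combination c * Complex.I_sq
  refine ⟨?_, ?_, ?_⟩
  · -- Part (i)
    set f₁ : ℂ → ℂ := fun u => (1 - u^2)/((2-u)*(z*u-1)) with hf₁def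
    have hdiff : ∀ x ∈ closedBall (0:ℂ) 1, DifferentiableAt ℂ f₁ x := by
      intro x hx
      have hx1 : ‖x‖ ≤ 1 := by
        simpa using mem_closedBall_zero_iff.mp hx
      exact DifferentiableAt.div (by fun_prop) (by fun_prop)
        (mul_ne_zero (two_sub_ne x hx1) (mul_sub_one_ne hz x hx1))
    have hw : ‖((1:ℂ)/2)‖ < 1 := by
      rw [norm_div, norm_one, Complex.norm_two]; norm_num
    have key := cauchy_circle f₁ hdiff hw
    set F : ℝ → ℂ := fun θ =>
      (((‖(2 - Complex.exp (θ * Complex.I)) / (Real.sqrt 3 : ℂ)‖) ^ 2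
            * (-12 * Real.sin θ / (5 - 4 * Real.cos θ) ^ 2) : ℝ) : ℂ)
          / (z - Complex.exp (θ * Complex.I)) with hF
    have hsub : (∫ θ in (0:ℝ)..(2*Real.pi), F (2*Real.pi - θ)) = ∫ θ in (0:ℝ)..(2*Real.pi), F θ := by
      simpa using intervalIntegral.integral_comp_sub_left (a := 0) (b := 2*Real.pi) F (2*Real.pi)
    have hptwise : ∀ θ : ℝ, F (2*Real.pi - θ) =
        Complex.exp ((θ:ℂ)*Complex.I) * Complex.I *
          ((Complex.exp ((θ:ℂ)*Complex.I) - 1/2)⁻¹ * f₁ (Complex.exp ((θ:ℂ)*Complex.I))) := by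
      intro θ
      simp only [hF, hf₁def]
      have hu : Complex.exp ((θ:ℂ)*Complex.I) ≠ 0 := Complex.exp_ne_zero _
      have hu1 : ‖(Complex.exp ((θ:ℂ)*Complex.I))‖ = 1 :=
        Complex.norm_exp_ofReal_mul_I θ
      have h2u : (2:ℂ) - Complex.exp ((θ:ℂ)*Complex.I) ≠ 0 := two_sub_ne _ hu1.le
      have hzu : z * Complex.exp ((θ:ℂ)*Complex.I) - 1 ≠ 0 := mul_sub_one_ne hz _ hu1.le
      have h21 : 2 * Complex.exp ((θ:ℂ)*Complex.I) - 1 ≠ 0 := by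
        intro h
        rw [sub_eq_zero] at h
        have h' := congrArg (‖·‖) h.symm
        simp only [norm_mul, hu1] at h'
        norm_num at h'
      have hE : Complex.exp ((↑(2*Real.pi - θ):ℂ) * Complex.I)
          = (Complex.exp ((θ:ℂ)*Complex.I))⁻¹ := by
        have harg : ((↑(2*Real.pi - θ):ℂ) * Complex.I)
            = -((θ:ℂ)*Complex.I) + 2*Real.pi*Complex.I := by push_cast; ring
        rw [harg, Complex.exp_add, Complex.exp_two_pi_mul_I, mul_one, Complex.exp_neg]
      rw [abs_sq_eq]
      rw [show Real.sin (2*Real.pi - θ) = -Real.sin θ by simp [Real.sin_sub],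
        show Real.cos (2*Real.pi - θ) = Real.cos θ by simp [Real.cos_sub]]
      rw [hE]
      push_cast
      rw [sin_eq_u, cos_eq_u]
      have hhalf : Complex.exp ((θ:ℂ)*Complex.I) - 1/2 ≠ 0 := by
        intro h
        apply h21
        rw [sub_eq_zero] at h ⊢
        linear_combination 2 * h
      have hz_u : z - (Complex.exp ((θ:ℂ)*Complex.I))⁻¹ ≠ 0 := by
        intro h
        apply hzu
        have := congrArg (· * Complex.exp ((θ:ℂ)*Complex.I)) h
        simp only [sub_mul, inv_mul_cancel₀ hu, zero_mul] at this
        linear_combination this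
      rw [show (5:ℂ) - 4*((Complex.exp ((θ:ℂ)*Complex.I)^2 + 1)
            / (2*Complex.exp ((θ:ℂ)*Complex.I)))
          = (2 - Complex.exp ((θ:ℂ)*Complex.I)) * (2*Complex.exp ((θ:ℂ)*Complex.I) - 1)
            / Complex.exp ((θ:ℂ)*Complex.I) from by field_simp; ring]
      rw [show z - (Complex.exp ((θ:ℂ)*Complex.I))⁻¹
          = (z * Complex.exp ((θ:ℂ)*Complex.I) - 1) / Complex.exp ((θ:ℂ)*Complex.I) from by
        field_simp]
      rw [show Complex.exp ((θ:ℂ)*Complex.I) - 1/2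
          = (2*Complex.exp ((θ:ℂ)*Complex.I) - 1)/2 from by ring]
      simp only [div_pow, mul_pow]
      simp only [division_def, mul_inv, inv_inv, inv_pow]
      have hzu' : Complex.exp ((θ:ℂ)*Complex.I) * z - 1 ≠ 0 := by rwa [mul_comm]
      field_simp
      ring
    have hkey : (∫ θ in (0:ℝ)..(2*Real.pi), F θ) = 2 * Real.pi * Complex.I * f₁ (1/2) := by
      rw [← hsub, intervalIntegral.integral_congr (fun θ _ => hptwise θ)]
      exact key
    rw [hkey, hIfin]
    simp only [hf₁def]
    have hzz : z * (1/2) - 1 ≠ 0 := by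
      intro h
      apply h2z'
      linear_combination 2*h
    have hd2 : (2:ℂ) - 1/2 ≠ 0 := by norm_num
    field_simp [hzz, hd2, h2z]
    ring
  · -- Part (ii)
    set f₂ : ℂ → ℂ := fun u => 2*(1 - u^2)*u^(m+2)/((2-u)^2*(z*u-1)) with hf₂def
    have hdiff : ∀ x ∈ closedBall (0:ℂ) 1, DifferentiableAt ℂ f₂ x := by
      intro x hx
      have hx1 : ‖x‖ ≤ 1 := by
        simpa using mem_closedBall_zero_iff.mp hx
      exact DifferentiableAt.div (by fun_prop) (by fun_prop)
        (mul_ne_zero (pow_ne_zero 2 (two_sub_ne x hx1)) (mul_sub_one_ne hz x hx1))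
    have hw : ‖((0:ℂ))‖ < 1 := by simp
    have key := cauchy_circle f₂ hdiff hw
    set F : ℝ → ℂ := fun θ =>
      ((2 - Complex.exp (θ * Complex.I)) / (Real.sqrt 3 : ℂ)) ^ 2
          * ((-12 * Real.sin θ / (5 - 4 * Real.cos θ) ^ 2 : ℝ) : ℂ)
          * Complex.exp (-((m+2 : ℕ) : ℂ) * θ * Complex.I)
          / (z - Complex.exp (θ * Complex.I)) with hF
    have hsub : (∫ θ in (0:ℝ)..(2*Real.pi), F (2*Real.pi - θ)) = ∫ θ in (0:ℝ)..(2*Real.pi), F θ := by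
      simpa using intervalIntegral.integral_comp_sub_left (a := 0) (b := 2*Real.pi) F (2*Real.pi)
    have hptwise : ∀ θ : ℝ, F (2*Real.pi - θ) =
        Complex.exp ((θ:ℂ)*Complex.I) * Complex.I *
          ((Complex.exp ((θ:ℂ)*Complex.I) - 0)⁻¹ * f₂ (Complex.exp ((θ:ℂ)*Complex.I))) := by
      intro θ
      simp only [hF, hf₂def]
      have hu : Complex.exp ((θ:ℂ)*Complex.I) ≠ 0 := Complex.exp_ne_zero _
      have hu1 : ‖(Complex.exp ((θ:ℂ)*Complex.I))‖ = 1 :=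
        Complex.norm_exp_ofReal_mul_I θ
      have h2u : (2:ℂ) - Complex.exp ((θ:ℂ)*Complex.I) ≠ 0 := two_sub_ne _ hu1.le
      have hzu : z * Complex.exp ((θ:ℂ)*Complex.I) - 1 ≠ 0 := mul_sub_one_ne hz _ hu1.le
      have h21 : 2 * Complex.exp ((θ:ℂ)*Complex.I) - 1 ≠ 0 := by
        intro h
        rw [sub_eq_zero] at h
        have h' := congrArg (‖·‖) h.symm
        simp only [norm_mul, hu1] at h'
        norm_num at h'
      have hE : Complex.exp ((↑(2*Real.pi - θ):ℂ) * Complex.I)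
          = (Complex.exp ((θ:ℂ)*Complex.I))⁻¹ := by
        have harg : ((↑(2*Real.pi - θ):ℂ) * Complex.I)
            = -((θ:ℂ)*Complex.I) + 2*Real.pi*Complex.I := by push_cast; ring
        rw [harg, Complex.exp_add, Complex.exp_two_pi_mul_I, mul_one, Complex.exp_neg]
      have hE2 : Complex.exp (-((m+2 : ℕ) : ℂ) * ((2*Real.pi - θ : ℝ):ℂ) * Complex.I)
          = Complex.exp ((θ:ℂ)*Complex.I)^(m+2) := by
        have harg : (-((m+2 : ℕ) : ℂ) * ((2*Real.pi - θ : ℝ):ℂ) * Complex.I)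
            = ((m+2:ℕ):ℂ)*((θ:ℂ)*Complex.I) + ((-(m+2:ℕ) : ℤ):ℂ)*(2*Real.pi*Complex.I) := by
          push_cast; ring
        rw [harg, Complex.exp_add, Complex.exp_int_mul_two_pi_mul_I, mul_one,
          Complex.exp_nat_mul]
      rw [hE, hE2]
      rw [show Real.sin (2*Real.pi - θ) = -Real.sin θ by simp [Real.sin_sub],
        show Real.cos (2*Real.pi - θ) = Real.cos θ by simp [Real.cos_sub]]
      push_cast
      rw [sin_eq_u, cos_eq_u]
      rw [show (5:ℂ) - 4*((Complex.exp ((θ:ℂ)*Complex.I)^2 + 1)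
            / (2*Complex.exp ((θ:ℂ)*Complex.I)))
          = (2 - Complex.exp ((θ:ℂ)*Complex.I)) * (2*Complex.exp ((θ:ℂ)*Complex.I) - 1)
            / Complex.exp ((θ:ℂ)*Complex.I) from by field_simp; ring]
      rw [show z - (Complex.exp ((θ:ℂ)*Complex.I))⁻¹
          = (z * Complex.exp ((θ:ℂ)*Complex.I) - 1) / Complex.exp ((θ:ℂ)*Complex.I) from by
        field_simp]
      rw [show (2:ℂ) - (Complex.exp ((θ:ℂ)*Complex.I))⁻¹
          = (2 * Complex.exp ((θ:ℂ)*Complex.I) - 1) / Complex.exp ((θ:ℂ)*Complex.I) from by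
        field_simp]
      simp only [div_pow, mul_pow, sub_zero]
      rw [h3]
      simp only [division_def, mul_inv, inv_inv, inv_pow]
      have hzu' : Complex.exp ((θ:ℂ)*Complex.I) * z - 1 ≠ 0 := by rwa [mul_comm]
      field_simp
      ring
    have hkey : (∫ θ in (0:ℝ)..(2*Real.pi), F θ) = 2 * Real.pi * Complex.I * f₂ 0 := by
      rw [← hsub, intervalIntegral.integral_congr (fun θ _ => hptwise θ)]
      exact key
    have hf20 : f₂ 0 = 0 := by
      simp [hf₂def, zero_pow (by omega : m + 2 ≠ 0)]
    rw [hkey, hf20]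
    ring
  · -- Part (iii)
    set f₃ : ℂ → ℂ := fun u => 2*(1 - u^2)*u^m/(2-u)^2 with hf₃def
    have hdiff : ∀ x ∈ closedBall (0:ℂ) 1, DifferentiableAt ℂ f₃ x := by
      intro x hx
      have hx1 : ‖x‖ ≤ 1 := by
        simpa using mem_closedBall_zero_iff.mp hx
      exact DifferentiableAt.div (by fun_prop) (by fun_prop)
        (pow_ne_zero 2 (two_sub_ne x hx1))
    have key := cauchy_circle f₃ hdiff hz
    have hptwise : ∀ θ : ℝ,
        ((2 * Complex.exp ((θ:ℂ) * Complex.I) ^ (m+2-1)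
            - Complex.exp ((θ:ℂ) * Complex.I) ^ (m+2-2)) / (Real.sqrt 3 : ℂ)) ^ 2
          * ((-12 * Real.sin θ / (5 - 4 * Real.cos θ) ^ 2 : ℝ) : ℂ)
          * Complex.exp (-(((m+2:ℕ) : ℂ) - 2) * θ * Complex.I)
          / (z - Complex.exp ((θ:ℂ) * Complex.I)) =
        Complex.exp ((θ:ℂ)*Complex.I) * Complex.I *
          ((Complex.exp ((θ:ℂ)*Complex.I) - z)⁻¹ * f₃ (Complex.exp ((θ:ℂ)*Complex.I))) := by
      intro θ
      simp only [hf₃def]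
      have hu : Complex.exp ((θ:ℂ)*Complex.I) ≠ 0 := Complex.exp_ne_zero _
      have hu1 : ‖(Complex.exp ((θ:ℂ)*Complex.I))‖ = 1 :=
        Complex.norm_exp_ofReal_mul_I θ
      have h2u : (2:ℂ) - Complex.exp ((θ:ℂ)*Complex.I) ≠ 0 := two_sub_ne _ hu1.le
      have h21 : 2 * Complex.exp ((θ:ℂ)*Complex.I) - 1 ≠ 0 := by
        intro h
        rw [sub_eq_zero] at h
        have h' := congrArg (‖·‖) h.symm
        simp only [norm_mul, hu1] at h'
        norm_num at h'
      have hez : Complex.exp ((θ:ℂ)*Complex.I) - z ≠ 0 := by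
        intro h
        rw [sub_eq_zero] at h
        rw [← h, hu1] at hz
        norm_num at hz
      have hze : z - Complex.exp ((θ:ℂ)*Complex.I) ≠ 0 := by
        intro h; apply hez; linear_combination -h
      have hE3 : Complex.exp (-(((m+2:ℕ) : ℂ) - 2) * (θ:ℂ) * Complex.I)
          = (Complex.exp ((θ:ℂ)*Complex.I)^m)⁻¹ := by
        have harg : (-(((m+2:ℕ) : ℂ) - 2) * (θ:ℂ) * Complex.I)
            = ((m:ℕ):ℂ)*(-((θ:ℂ)*Complex.I)) := by push_cast; ring
        rw [harg, Complex.exp_nat_mul, Complex.exp_neg, inv_pow]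
      rw [hE3]
      rw [show m+2-1 = m+1 from rfl, show m+2-2 = m from rfl]
      push_cast
      rw [sin_eq_u, cos_eq_u]
      rw [show (5:ℂ) - 4*((Complex.exp ((θ:ℂ)*Complex.I)^2 + 1)
            / (2*Complex.exp ((θ:ℂ)*Complex.I)))
          = (2 - Complex.exp ((θ:ℂ)*Complex.I)) * (2*Complex.exp ((θ:ℂ)*Complex.I) - 1)
            / Complex.exp ((θ:ℂ)*Complex.I) from by field_simp; ring]
      simp only [div_pow, mul_pow]
      rw [h3]
      simp only [division_def, mul_inv, inv_inv, inv_pow]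
      field_simp
      ring
    have hkey : (∫ θ in (0:ℝ)..(2 * Real.pi),
        ((2 * Complex.exp (θ * Complex.I) ^ (m+2-1) - Complex.exp (θ * Complex.I) ^ (m+2-2))
            / (Real.sqrt 3 : ℂ)) ^ 2
          * ((-12 * Real.sin θ / (5 - 4 * Real.cos θ) ^ 2 : ℝ) : ℂ)
          * Complex.exp (-(((m+2:ℕ) : ℂ) - 2) * θ * Complex.I)
          / (z - Complex.exp (θ * Complex.I)))
        = 2 * Real.pi * Complex.I * f₃ z := by
      rw [intervalIntegral.integral_congr (fun θ _ => hptwise θ)]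
      exact key
    rw [hkey, hIfin]
    simp only [hf₃def]
    rw [show m + 2 - 2 = m from rfl]
    field_simp [h2z, h2z']
    ring
end

section
/- Let n ≥ 1 and let x₁, …, x_n be the n distinct (n+1)-st roots of unity different from 1 (equivalently, the zeros of the polynomial Σ_{j=0}^{n} z^j). Then for every j ∈ {1,…,n}: Im[ x_j·( Σ_{k≠j} 1/(x_j − x_k) + 1/(x_j − 1) ) ] = 0. (That is, particles of charge +1 at x₁,…,x_n together with a particle of charge +1 at 1 exert on each x_j a force normal to the unit circle at x_j.) -/
open Complex

/-- Particles of charge `+1` at the `(n+1)`-st roots of unity different from `1`, together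
with a particle of charge `+1` at `1`, exert on each such root a force normal to the unit
circle there. -/
theorem stmt_17 (n : ℕ) (hn : 1 ≤ n) (x : ℕ → ℂ)
    (hx : ∀ k, x k = Complex.exp (2 * Real.pi * Complex.I * k / (n + 1))) :
    ∀ j ∈ Finset.Icc 1 n,
      (x j * ((∑ k ∈ (Finset.Icc 1 n).erase j, 1 / (x j - x k)) + 1 / (x j - 1))).im = 0 := by
  intro j hj
  obtain ⟨hj1, hjn⟩ := Finset.mem_Icc.mp hj
  have hmC : ((n : ℂ) + 1) ≠ 0 := Nat.cast_add_one_ne_zero (R := ℂ) n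
  have hpi : (Real.pi : ℂ) ≠ 0 := by simpa using Real.pi_ne_zero
  have hI : Complex.I ≠ 0 := Complex.I_ne_zero
  have hxne : ∀ k, x k ≠ 0 := fun k => by rw [hx]; exact Complex.exp_ne_zero _
  -- multiplicativity
  have hmul : ∀ a b : ℕ, x a * x b = x (a + b) := by
    intro a b
    rw [hx, hx, hx, ← Complex.exp_add]
    congr 1
    push_cast
    field_simp
  -- periodicity
  have hper : ∀ a : ℕ, x (a + (n + 1)) = x a := by
    intro a
    rw [hx, hx]
    have h1 : (2 * (Real.pi : ℂ) * Complex.I * (↑(a + (n + 1))) / (↑n + 1))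
        = 2 * (Real.pi : ℂ) * Complex.I * a / ((n : ℂ) + 1) + 2 * Real.pi * Complex.I := by
      push_cast
      field_simp
    rw [h1, Complex.exp_add, Complex.exp_two_pi_mul_I, mul_one]
  have hperk : ∀ a t : ℕ, x (a + t * (n + 1)) = x a := by
    intro a t
    induction t with
    | zero => simp
    | succ s ih =>
      have h : a + (s + 1) * (n + 1) = (a + s * (n + 1)) + (n + 1) := by ring
      rw [h, hper, ih]
  have hmod : ∀ a : ℕ, x (a % (n + 1)) = x a := by
    intro a
    conv_rhs => rw [← Nat.mod_add_div a (n + 1)]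
    rw [show a % (n + 1) + (n + 1) * (a / (n + 1))
        = a % (n + 1) + (a / (n + 1)) * (n + 1) by ring]
    rw [hperk]
  have hcongr : ∀ a b : ℕ, a % (n + 1) = b % (n + 1) → x a = x b := by
    intro a b h
    rw [← hmod a, ← hmod b, h]
  -- injectivity below n+1
  have hx_inj : ∀ a b : ℕ, a ≤ n → b ≤ n → x a = x b → a = b := by
    intro a b ha hb h
    rw [hx, hx, Complex.exp_eq_exp_iff_exists_int] at h
    obtain ⟨t, ht⟩ := h
    field_simp at ht
    have h2 : (2 : ℂ) * Real.pi * Complex.I ≠ 0 := by simp [hpi, hI]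
    have key : (a : ℂ) = (b : ℂ) + t * ((n : ℂ) + 1) := by
      apply mul_left_cancel₀ h2
      linear_combination (2 * (Real.pi : ℂ) * Complex.I) * ht
    have kz : (a : ℤ) = (b : ℤ) + t * ((n : ℤ) + 1) := by exact_mod_cast key
    have hb1 : -(n : ℤ) ≤ t * ((n : ℤ) + 1) := by omega
    have hb2 : t * ((n : ℤ) + 1) ≤ (n : ℤ) := by omega
    have ht0 : t = 0 := by
      rcases lt_trichotomy t 0 with h' | h' | h'
      · nlinarith
      · exact h'
      · nlinarith
    subst ht0
    simp at kz
    omega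
  -- the reflection involution
  set σ : ℕ → ℕ := fun k => (j + j + ((n + 1) - k)) % (n + 1) with hσdef
  have hσlt : ∀ k, σ k ≤ n := by
    intro k
    have := Nat.mod_lt (j + j + ((n + 1) - k)) (y := n + 1) (by omega)
    simpa [hσdef] using Nat.lt_succ_iff.mp this
  have hστ : ∀ k, k ≤ n + 1 → x (σ k) * x k = x (j + j) := by
    intro k hk
    rw [hmul]
    apply hcongr
    rw [hσdef]
    simp only
    rw [Nat.mod_add_mod,
      show j + j + ((n + 1) - k) + k = (j + j) + (n + 1) from by omega,
      Nat.add_mod_right]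
  have hσne : ∀ k, k ≤ n → k ≠ j → σ k ≠ j := by
    intro k hk hkj h
    have h1 := hστ k (by omega)
    rw [h, ← hmul j j] at h1
    have := mul_left_cancel₀ (hxne j) h1
    exact hkj (hx_inj k j hk hjn this)
  have hσσ : ∀ k, k ≤ n → σ (σ k) = k := by
    intro k hk
    have h1 := hστ k (by omega)
    have h2 := hστ (σ k) (by have := hσlt k; omega)
    have h3 : x (σ (σ k)) * x (σ k) = x k * x (σ k) := by
      rw [h2, ← h1]; ring
    have h4 := mul_right_cancel₀ (hxne (σ k)) h3
    exact hx_inj _ _ (hσlt _) hk h4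
  -- conjugation facts
  have hconj : ∀ a : ℕ, (starRingEnd ℂ) (x a) = (x a)⁻¹ := by
    intro a
    rw [hx, ← Complex.exp_conj, ← Complex.exp_neg]
    congr 1
    simp [map_div₀, map_mul, Complex.conj_I, map_ofNat]
    ring
  have hterm : ∀ k, k ≤ n → k ≠ j →
      (starRingEnd ℂ) (x j / (x j - x k)) = x j / (x j - x (σ k)) := by
    intro k hk hkj
    have hkjne : x k ≠ x j := fun h => hkj (hx_inj k j hk hjn h)
    have hσval : x (σ k) = x j * x j / x k := by
      rw [eq_div_iff (hxne k), hστ k (by omega), ← hmul]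
    have h1 : x k - x j ≠ 0 := sub_ne_zero.mpr hkjne
    rw [map_div₀, map_sub, hconj, hconj, hσval]
    rw [inv_sub_inv (hxne j) (hxne k), div_div_eq_mul_div]
    have h2 : x j - x j * x j / x k = (x j * (x k - x j)) / x k := by
      rw [eq_div_iff (hxne k), sub_mul, div_mul_cancel₀ _ (hxne k)]
      ring
    rw [h2, div_div_eq_mul_div]
    rw [div_eq_div_iff h1 (mul_ne_zero (hxne j) h1)]
    field_simp [hxne j, hxne k]
  -- rewrite the sum
  have h0notin : (0 : ℕ) ∉ (Finset.Icc 1 n).erase j := by simp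
  have hx0 : x 0 = 1 := by rw [hx]; simp
  have hE : (Finset.Icc 0 n).erase j = insert 0 ((Finset.Icc 1 n).erase j) := by
    ext a
    simp only [Finset.mem_erase, Finset.mem_Icc, Finset.mem_insert]
    omega
  have hrw : x j * ((∑ k ∈ (Finset.Icc 1 n).erase j, 1 / (x j - x k)) + 1 / (x j - 1))
      = ∑ k ∈ (Finset.Icc 0 n).erase j, x j / (x j - x k) := by
    rw [hE, Finset.sum_insert h0notin, hx0, mul_add, Finset.mul_sum]
    simp only [mul_one_div]
    exact add_comm _ _
  rw [hrw, ← Complex.conj_eq_iff_im, map_sum]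
  apply Finset.sum_nbij' σ σ
  · intro a ha
    simp only [Finset.mem_erase, Finset.mem_Icc] at ha ⊢
    exact ⟨hσne a ha.2.2 ha.1, Nat.zero_le _, hσlt a⟩
  · intro a ha
    simp only [Finset.mem_erase, Finset.mem_Icc] at ha ⊢
    exact ⟨hσne a ha.2.2 ha.1, Nat.zero_le _, hσlt a⟩
  · intro a ha
    simp only [Finset.mem_erase, Finset.mem_Icc] at ha
    exact hσσ a ha.2.2
  · intro a ha
    simp only [Finset.mem_erase, Finset.mem_Icc] at ha
    exact hσσ a ha.2.2
  · intro a ha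
    simp only [Finset.mem_erase, Finset.mem_Icc] at ha
    exact hterm a ha.2.2 ha.1
end
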